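/- (Polynomial systems as Leontief market equilibria.) Let F be a bounded polynomial system in variables z_1, …, z_n. Then there exists an exchange market M, in which every agent has a Leontief utility function, whose set of goods includes n + 1 distinguished goods G_1, …, G_n and G_s, such that: (i) every equilibrium (p, (x_i)) of M satisfies p_s > 0; and (ii) the set { (p_1, …, p_n) : p is an equilibrium price vector of M normalized so that p_s = 1 } is exactly the set of solutions of F. In particular, M admits an equilibrium if and only if F admits a solution. -/

import Mathlib

open Finset

/-- The Leontief utility function with coefficient vector `A`:
`U(y) = min over {j : A j > 0} of y j / A j` (as the infimum of this finite set). -/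
noncomputable def leontief {G : Type*} (A : G → ℝ) (y : G → ℝ) : ℝ :=
  sInf {t : ℝ | ∃ j, 0 < A j ∧ t = y j / A j}

/-- `x` is an optimal bundle at prices `p` for an agent with budget `budget`
and utility function `U`. -/
def IsOptimalBundle {G : Type*} [Fintype G] (p : G → ℝ) (budget : ℝ)
    (U : (G → ℝ) → ℝ) (x : G → ℝ) : Prop :=
  (∀ j, 0 ≤ x j) ∧ (∑ j, p j * x j ≤ budget) ∧
    ∀ y : G → ℝ, (∀ j, 0 ≤ y j) → (∑ j, p j * y j ≤ budget) → U y ≤ U x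

/-- Equilibrium of an exchange market given by endowments `W` and utilities `U`:
prices are nonnegative, every agent gets an optimal affordable bundle, no good
is over-demanded, and positively priced goods clear exactly. -/
def IsEquilibrium {ι G : Type*} [Fintype ι] [Fintype G]
    (W : ι → G → ℝ) (U : ι → (G → ℝ) → ℝ) (p : G → ℝ) (x : ι → G → ℝ) : Prop :=
  (∀ j, 0 ≤ p j) ∧
  (∀ i, IsOptimalBundle p (∑ j, p j * W i j) (U i) (x i)) ∧
  (∀ j, ∑ i, x i j ≤ ∑ i, W i j) ∧
  (∀ j, 0 < p j → ∑ i, x i j = ∑ i, W i j)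

/-- Good `r` is exclusive to the set `S` of agents: every agent outside `S` has
no endowment of `r` and a utility function not depending on the `r`-coordinate. -/
def ExclusiveGood {ι G : Type*} (W : ι → G → ℝ) (U : ι → (G → ℝ) → ℝ)
    (r : G) (S : Set ι) : Prop :=
  ∀ i ∉ S, W i r = 0 ∧ ∀ y y' : G → ℝ, (∀ j, j ≠ r → y j = y' j) → U i y = U i y'

namespace PL

variable {G : Type*} [Fintype G]

lemma leontief_set_eq (A y : G → ℝ) :
    {t : ℝ | ∃ j, 0 < A j ∧ t = y j / A j} = (fun j => y j / A j) '' {j | 0 < A j} := by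
  ext t; simp [eq_comm, Set.mem_image]

lemma leontief_set_finite (A y : G → ℝ) :
    {t : ℝ | ∃ j, 0 < A j ∧ t = y j / A j}.Finite := by
  rw [leontief_set_eq]; exact Set.Finite.image _ (Set.toFinite _)

lemma leontief_set_nonempty (A : G → ℝ) (hA : ∃ j, 0 < A j) (y : G → ℝ) :
    {t : ℝ | ∃ j, 0 < A j ∧ t = y j / A j}.Nonempty := by
  obtain ⟨j, hj⟩ := hA; exact ⟨y j / A j, j, hj, rfl⟩

lemma leontief_le (A : G → ℝ) (y : G → ℝ) {j : G} (hj : 0 < A j) :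
    leontief A y ≤ y j / A j := by
  refine csInf_le (Set.Finite.bddBelow (leontief_set_finite A y)) ⟨j, hj, rfl⟩

lemma le_leontief (A : G → ℝ) (hA : ∃ j, 0 < A j) (y : G → ℝ) {c : ℝ}
    (h : ∀ j, 0 < A j → c ≤ y j / A j) : c ≤ leontief A y := by
  refine le_csInf (leontief_set_nonempty A hA y) ?_
  rintro t ⟨j, hj, rfl⟩; exact h j hj

lemma leontief_smul (A : G → ℝ) (hA : ∃ j, 0 < A j) (t : ℝ) :
    leontief A (fun j => t * A j) = t := by
  refine le_antisymm ?_ ?_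
  · obtain ⟨j, hj⟩ := hA
    calc leontief A _ ≤ t * A j / A j := leontief_le A _ hj
    _ = t := by field_simp
  · refine le_leontief A hA _ (fun j hj => by rw [mul_div_assoc, div_self hj.ne', mul_one])

lemma leontief_exists_min (A : G → ℝ) (hA : ∃ j, 0 < A j) (y : G → ℝ) :
    ∃ j, 0 < A j ∧ leontief A y = y j / A j := by
  have h := Set.Nonempty.csInf_mem (leontief_set_nonempty A hA y) (leontief_set_finite A y)
  obtain ⟨j, hj, h⟩ := h
  exact ⟨j, hj, h⟩

/-- Existence direction: the proportional bundle is optimal. -/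
lemma optimal_of (p A : G → ℝ) (hp : ∀ j, 0 ≤ p j) (hA : ∀ j, 0 ≤ A j)
    (hA0 : ∃ j, 0 < A j) {B : ℝ} (hB : 0 ≤ B)
    (hC : 0 < ∑ j, p j * A j) :
    IsOptimalBundle p B (leontief A) (fun j => B / (∑ j, p j * A j) * A j) := by
  set C := ∑ j, p j * A j with hCdef
  have ht : 0 ≤ B / C := div_nonneg hB hC.le
  refine ⟨fun j => mul_nonneg ht (hA j), ?_, ?_⟩
  · have : ∑ j, p j * (B / C * A j) = B / C * C := by
      rw [Finset.mul_sum]; congr 1; ext j; ring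
    rw [this, div_mul_cancel₀ _ hC.ne']
  · intro y hy hyb
    rw [leontief_smul A hA0]
    by_contra hlt
    push_neg at hlt
    -- every wanted coord of y exceeds (B/C) * A j
    have hkey : ∀ j, 0 < A j → (B / C) * A j < y j := by
      intro j hj
      have := leontief_le A y hj
      have : B / C < y j / A j := lt_of_lt_of_le hlt this
      have h4 : (B/C) * A j < (y j / A j) * A j := mul_lt_mul_of_pos_right this hj
      have h5 : (y j / A j) * A j = y j := by field_simp
      linarith
    have hsum : B < ∑ j, p j * y j → False := fun h => absurd hyb (not_le.mpr h)
    apply hsum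
    have hCpos : ∃ j, 0 < p j * A j := by
      by_contra hno
      push_neg at hno
      have : C ≤ 0 := Finset.sum_nonpos (fun j _ => hno j)
      exact absurd hC (not_lt.mpr this)
    obtain ⟨j₀, hj₀⟩ := hCpos
    have hAj₀ : 0 < A j₀ := by
      rcases (hA j₀).lt_or_eq with h | h
      · exact h
      · exfalso; rw [← h] at hj₀; simp at hj₀
    have hle : ∀ j, p j * (B / C * A j) ≤ p j * y j := by
      intro j
      rcases (hA j).lt_or_eq with h | h
      · exact mul_le_mul_of_nonneg_left (le_of_lt (hkey j h)) (hp j)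
      · rw [← h]; simpa [← h] using mul_nonneg (hp j) (hy j)
    have hlt' : p j₀ * (B / C * A j₀) < p j₀ * y j₀ := by
      have hpj₀ : 0 < p j₀ := by
        rcases (hp j₀).lt_or_eq with h | h
        · exact h
        · exfalso; rw [← h] at hj₀; simp at hj₀
      exact mul_lt_mul_of_pos_left (hkey j₀ hAj₀) hpj₀
    have : ∑ j, p j * (B / C * A j) < ∑ j, p j * y j :=
      Finset.sum_lt_sum (fun j _ => hle j) ⟨j₀, Finset.mem_univ _, hlt'⟩
    have hB' : ∑ j, p j * (B / C * A j) = B := by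
      have : ∑ j, p j * (B / C * A j) = B / C * C := by
        rw [Finset.mul_sum]; congr 1; ext j; ring
      rw [this, div_mul_cancel₀ _ hC.ne']
    linarith

/-- Forward direction: exact demand on positively priced goods. -/
lemma optimal_char (p A : G → ℝ) (hp : ∀ j, 0 ≤ p j) (hA : ∀ j, 0 ≤ A j)
    (hA0 : ∃ j, 0 < A j) {B : ℝ} (hB : 0 ≤ B)
    (hC : 0 < ∑ j, p j * A j) {x : G → ℝ}
    (hx : IsOptimalBundle p B (leontief A) x) :
    ∀ j, 0 < p j → x j = B / (∑ j, p j * A j) * A j := by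
  set C := ∑ j, p j * A j with hCdef
  obtain ⟨hx0, hxb, hopt⟩ := hx
  -- U x ≥ B / C
  have hU : B / C ≤ leontief A x := by
    have h1 := hopt (fun j => B / C * A j)
      (fun j => mul_nonneg (div_nonneg hB hC.le) (hA j))
      (by
        have : ∑ j, p j * (B / C * A j) = B / C * C := by
          rw [Finset.mul_sum]; congr 1; ext j; ring
        rw [this, div_mul_cancel₀ _ hC.ne'])
    rwa [leontief_smul A hA0] at h1
  -- coordinatewise x j ≥ B/C * A j on wanted goods
  have hcoord : ∀ j, B / C * A j ≤ x j := by
    intro j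
    rcases (hA j).lt_or_eq with h | h
    · have := leontief_le A x h
      have h2 : B / C ≤ x j / A j := le_trans hU this
      calc B / C * A j ≤ (x j / A j) * A j := mul_le_mul_of_nonneg_right h2 (hA j)
      _ = x j := by field_simp
    · rw [← h]; simpa using hx0 j
  -- spending at least B
  have hsp : ∑ j, p j * x j = B := by
    have hge : B ≤ ∑ j, p j * x j := by
      have : ∑ j, p j * (B / C * A j) ≤ ∑ j, p j * x j :=
        Finset.sum_le_sum (fun j _ => mul_le_mul_of_nonneg_left (hcoord j) (hp j))
      have hB' : ∑ j, p j * (B / C * A j) = B := by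
        have h3 : ∑ j, p j * (B / C * A j) = B / C * C := by
          rw [Finset.mul_sum]; congr 1; ext j; ring
        rw [h3, div_mul_cancel₀ _ hC.ne']
      linarith
    linarith
  -- all slack zero
  intro j hpj
  have hterm : ∀ k, p k * (B / C * A k) ≤ p k * x k :=
    fun k => mul_le_mul_of_nonneg_left (hcoord k) (hp k)
  have hsum0 : ∑ k, (p k * x k - p k * (B / C * A k)) = 0 := by
    rw [Finset.sum_sub_distrib, hsp]
    have h3 : ∑ k, p k * (B / C * A k) = B / C * C := by
      rw [Finset.mul_sum]; congr 1; ext k; ring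
    rw [h3, div_mul_cancel₀ _ hC.ne', sub_self]
  have hzero : ∀ k ∈ Finset.univ, p k * x k - p k * (B / C * A k) = 0 := by
    intro k _
    refine (Finset.sum_eq_zero_iff_of_nonneg ?_).mp hsum0 k (Finset.mem_univ _)
    intro k' _; linarith [hterm k']
  have := hzero j (Finset.mem_univ _)
  have : p j * x j = p j * (B / C * A j) := by linarith
  exact mul_left_cancel₀ hpj.ne' this

/-- No optimal bundle when all wanted goods are free. -/
lemma no_optimal (p A : G → ℝ) (hp : ∀ j, 0 ≤ p j) (hA : ∀ j, 0 ≤ A j)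
    (hA0 : ∃ j, 0 < A j) {B : ℝ}
    (hC : ∑ j, p j * A j = 0) (x : G → ℝ) :
    ¬ IsOptimalBundle p B (leontief A) x := by
  rintro ⟨hx0, hxb, hopt⟩
  have hPA : ∀ j, p j * A j = 0 := by
    intro j
    have h := (Finset.sum_eq_zero_iff_of_nonneg
      (fun k _ => mul_nonneg (hp k) (hA k))).mp hC j (Finset.mem_univ _)
    exact h
  have h1 := hopt (fun j => x j + A j) (fun j => add_nonneg (hx0 j) (hA j))
    (by
      have : ∑ j, p j * (x j + A j) = ∑ j, p j * x j + ∑ j, p j * A j := by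
        rw [← Finset.sum_add_distrib]; congr 1; ext j; ring
      rw [this, hC, add_zero]; exact hxb)
  -- leontief A (x + A) = leontief A x + 1
  obtain ⟨j₀, hj₀, hmin⟩ := leontief_exists_min A hA0 (fun j => x j + A j)
  have h2 : leontief A x + 1 ≤ leontief A (fun j => x j + A j) := by
    refine le_leontief A hA0 _ (fun j hj => ?_)
    have := leontief_le A x hj
    have heq : (x j + A j) / A j = x j / A j + 1 := by field_simp
    rw [heq]
    linarith
  -- and leontief A x is ≥ 0? not needed: h1 : U (x+A) ≤ U x
  linarith

end PL
namespace PL2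

open MvPolynomial

variable {m n : ℕ}

noncomputable def gpoly (f : Fin m → MvPolynomial (Fin n) ℚ) (i : Fin m) :
    MvPolynomial (Fin n) ℚ :=
  aeval (fun j => X j - 1) (f i)

noncomputable def dpoly (f : Fin m → MvPolynomial (Fin n) ℚ) : Fin n →₀ ℕ :=
  Finset.univ.sup fun i => (gpoly f i).support.sup id

lemma support_le_dpoly (f : Fin m → MvPolynomial (Fin n) ℚ) (i : Fin m)
    {α : Fin n →₀ ℕ} (hα : α ∈ (gpoly f i).support) : α ≤ dpoly f := by
  refine le_trans ?_ (Finset.le_sup (f := fun i => (gpoly f i).support.sup id)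
    (Finset.mem_univ i))
  exact Finset.le_sup (f := id) hα

def Mon (f : Fin m → MvPolynomial (Fin n) ℚ) : Type := {α : Fin n →₀ ℕ // α ≤ dpoly f}

def Mon' (f : Fin m → MvPolynomial (Fin n) ℚ) : Type :=
  {α : Fin n →₀ ℕ // α ≤ dpoly f ∧ α ≠ 0}

noncomputable instance (f : Fin m → MvPolynomial (Fin n) ℚ) : Fintype (Mon f) := by
  classical
  exact Fintype.subtype (Finset.Iic (dpoly f)) (fun α => by simp [Finset.mem_Iic])

noncomputable instance (f : Fin m → MvPolynomial (Fin n) ℚ) : Fintype (Mon' f) := by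
  classical
  exact Fintype.subtype ((Finset.Iic (dpoly f)).filter (fun α => α ≠ 0))
    (fun α => by simp [Finset.mem_Iic])

variable (f : Fin m → MvPolynomial (Fin n) ℚ)

noncomputable instance : DecidableEq (Mon f) := Classical.decEq _
noncomputable instance : DecidableEq (Mon' f) := Classical.decEq _

def monzero : Mon f := ⟨0, zero_le⟩

def mk' (a : Mon' f) : Mon f := ⟨a.1, a.2.1⟩

noncomputable def jdec (a : Mon' f) : Fin n :=
  a.1.support.min' (Finsupp.support_nonempty_iff.2 a.2.2)

lemma jdec_mem (a : Mon' f) : jdec f a ∈ a.1.support := Finset.min'_mem _ _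

lemma one_le_jdec (a : Mon' f) : 1 ≤ a.1 (jdec f a) := by
  have := jdec_mem f a
  rw [Finsupp.mem_support_iff] at this
  omega

noncomputable def bdec (a : Mon' f) : Mon f :=
  ⟨a.1 - Finsupp.single (jdec f a) 1, le_trans tsub_le_self a.2.1⟩

lemma decomp (a : Mon' f) :
    (bdec f a).1 + Finsupp.single (jdec f a) 1 = a.1 := by
  ext j
  simp only [bdec, Finsupp.add_apply, Finsupp.tsub_apply, Finsupp.single_apply]
  by_cases h : jdec f a = j
  · subst h
    have := one_le_jdec f a
    simp only [eq_self_iff_true, if_true]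
    omega
  · simp [h]

/-- the normalized monomial value -/
noncomputable def rho (z : Fin n → ℝ) (α : Fin n →₀ ℕ) : ℝ :=
  α.prod fun j k => (z j + 1) ^ k

lemma rho_zero (z : Fin n → ℝ) : rho z 0 = 1 := by simp [rho]

lemma rho_decomp (z : Fin n → ℝ) (a : Mon' f) :
    rho z a.1 = rho z (bdec f a).1 * (z (jdec f a) + 1) := by
  have h := decomp f a
  rw [← h, rho, Finsupp.prod_add_index' (by simp) (fun a b₁ b₂ => pow_add _ _ _)]
  rw [Finsupp.prod_single_index (by simp)]
  simp [rho]

lemma rho_pos {z : Fin n → ℝ} (hz : ∀ j, 0 ≤ z j) (α : Fin n →₀ ℕ) :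
    0 < rho z α := by
  refine Finset.prod_pos (fun j _ => ?_)
  have := hz j
  positivity

lemma aeval_gpoly (z : Fin n → ℝ) (i : Fin m) :
    aeval (fun j => z j + 1) (gpoly f i) = aeval z (f i) := by
  have hcomp : (aeval (R := ℚ) (fun j => z j + 1)).comp
      (aeval (fun j => (X j : MvPolynomial (Fin n) ℚ) - 1))
      = aeval (fun j => (z j + 1) - 1) := by
    apply MvPolynomial.algHom_ext
    intro j
    simp
  have := congrArg (fun φ => φ (f i)) hcomp
  simp only [AlgHom.comp_apply] at this
  rw [gpoly, this]
  congr 1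
  ext j
  ring

lemma sum_mon_eq_aeval (z : Fin n → ℝ) (i : Fin m) :
    ∑ α : Mon f, (((gpoly f i).coeff α.1 : ℚ) : ℝ) * rho z α.1
      = aeval z (f i) := by
  classical
  rw [← aeval_gpoly f z i]
  rw [aeval_def, eval₂_eq]
  have h1 : ∑ α : Mon f, (((gpoly f i).coeff α.1 : ℚ) : ℝ) * rho z α.1
      = ∑ α ∈ Finset.Iic (dpoly f), (((gpoly f i).coeff α : ℚ) : ℝ) * rho z α := by
    exact (Finset.sum_subtype (p := fun α => α ≤ dpoly f) (Finset.Iic (dpoly f))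
      (fun α => Finset.mem_Iic)
      (fun α => (((gpoly f i).coeff α : ℚ) : ℝ) * rho z α)).symm
  rw [h1]
  rw [← Finset.sum_subset (Finset.subset_iff.mpr
    (fun α hα => Finset.mem_Iic.mpr (support_le_dpoly f i hα)))
    (by
      intro α _ hα
      rw [MvPolynomial.notMem_support_iff] at hα
      simp [hα])]
  refine Finset.sum_congr rfl (fun α hα => ?_)
  rw [eq_ratCast (algebraMap ℚ ℝ)]
  rfl

end PL2

namespace PL2
open MvPolynomial

variable {m n : ℕ} (f : Fin m → MvPolynomial (Fin n) ℚ)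

abbrev GMIdx : Type := Mon' f × Fin 2

abbrev LinIdx : Type := (Fin n × Fin 3) ⊕ (Unit ⊕ (Fin m ⊕ (GMIdx f × Fin 2)))

abbrev GG : Type :=
  (Unit ⊕ (Fin n × Fin 4)) ⊕ ((Mon f ⊕ Mon' f) ⊕ ((GMIdx f × Fin 2) ⊕ (LinIdx f × Fin 2)))

def sG : GG f := Sum.inl (Sum.inl ())
def vG (j : Fin n) : GG f := Sum.inl (Sum.inr (j, 0))
def uG (j : Fin n) : GG f := Sum.inl (Sum.inr (j, 1))
def wG (j : Fin n) : GG f := Sum.inl (Sum.inr (j, 2))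
def zG (j : Fin n) : GG f := Sum.inl (Sum.inr (j, 3))
def monG (a : Mon f) : GG f := Sum.inr (Sum.inl (Sum.inl a))
def ppG (a : Mon' f) : GG f := Sum.inr (Sum.inl (Sum.inr a))
def dG (γ : GMIdx f) (k : Fin 2) : GG f := Sum.inr (Sum.inr (Sum.inl (γ, k)))
def padG (ℓ : LinIdx f) (k : Fin 2) : GG f := Sum.inr (Sum.inr (Sum.inr (ℓ, k)))

noncomputable instance : DecidableEq (GG f) := Classical.decEq _
noncomputable instance : DecidableEq (LinIdx f) := Classical.decEq _
noncomputable instance : DecidableEq (GMIdx f) := Classical.decEq _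

/-- indicator vector of a good -/
noncomputable def e (a g : GG f) : ℝ := if g = a then 1 else 0

lemma e_nonneg (a g : GG f) : 0 ≤ e f a g := by unfold e; split <;> norm_num

@[simp] lemma e_self (a : GG f) : e f a a = 1 := by simp [e]

lemma e_ne {a g : GG f} (h : g ≠ a) : e f a g = 0 := by simp [e, h]

lemma sum_pe (p : GG f → ℝ) (a : GG f) : ∑ g, p g * e f a g = p a := by
  rw [Finset.sum_eq_single a]
  · simp
  · intro g _ hg; simp [e_ne f hg]
  · intro h; exact absurd (Finset.mem_univ a) h

/-- target of the self-lover for a good (`sG` for the free goods v,u,w). -/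
def slT : GG f → GG f
  | Sum.inl (Sum.inr (j, k)) => if k = 3 then Sum.inl (Sum.inr (j, k)) else sG f
  | g => g

lemma slT_cases (g : GG f) : slT f g = g ∨ slT f g = sG f := by
  match g with
  | Sum.inl (Sum.inl ()) => exact Or.inl rfl
  | Sum.inl (Sum.inr (j, k)) =>
    have h : slT f (Sum.inl (Sum.inr (j, k)))
        = if k = 3 then (Sum.inl (Sum.inr (j, k)) : GG f) else sG f := rfl
    rw [h]
    split
    · exact Or.inl rfl
    · exact Or.inr rfl
  | Sum.inr g => exact Or.inl rfl

@[simp] lemma slT_sG : slT f (sG f) = sG f := rfl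
@[simp] lemma slT_zG (j : Fin n) : slT f (zG f j) = zG f j := by simp [slT, zG]
@[simp] lemma slT_monG (a : Mon f) : slT f (monG f a) = monG f a := rfl
@[simp] lemma slT_ppG (a : Mon' f) : slT f (ppG f a) = ppG f a := rfl
@[simp] lemma slT_dG (γ : GMIdx f) (k : Fin 2) : slT f (dG f γ k) = dG f γ k := rfl
@[simp] lemma slT_padG (ℓ : LinIdx f) (k : Fin 2) : slT f (padG f ℓ k) = padG f ℓ k := rfl

noncomputable def gmA (γ : GMIdx f) : GG f :=
  if γ.2 = 0 then monG f (bdec f γ.1) else monG f (mk' f γ.1)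

noncomputable def gmB (γ : GMIdx f) : GG f :=
  if γ.2 = 0 then zG f (jdec f γ.1) else sG f

noncomputable def cpos (i : Fin m) : GG f → ℝ := fun g =>
  match g with
  | Sum.inr (Sum.inl (Sum.inl a)) => max (((gpoly f i).coeff a.1 : ℚ) : ℝ) 0
  | _ => 0

noncomputable def cneg (i : Fin m) : GG f → ℝ := fun g =>
  match g with
  | Sum.inr (Sum.inl (Sum.inl a)) => max (-(((gpoly f i).coeff a.1 : ℚ) : ℝ)) 0
  | _ => 0

variable (L U : Fin n → ℚ)

noncomputable def linA : LinIdx f → GG f → ℝ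
  | Sum.inl (j, k) =>
    if k = 0 then e f (zG f j)
    else if k = 1 then e f (vG f j)
    else fun g => e f (vG f j) g + e f (wG f j) g
  | Sum.inr (Sum.inl _) => e f (monG f (monzero f))
  | Sum.inr (Sum.inr (Sum.inl i)) => cpos f i
  | Sum.inr (Sum.inr (Sum.inr (γ, k))) => e f (dG f γ k)

noncomputable def linB : LinIdx f → GG f → ℝ
  | Sum.inl (j, k) =>
    if k = 0 then fun g => e f (vG f j) g + e f (sG f) g
    else if k = 1 then fun g => (L j : ℝ) * e f (sG f) g + e f (uG f j) g
    else fun g => (U j : ℝ) * e f (sG f) g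
  | Sum.inr (Sum.inl _) => e f (sG f)
  | Sum.inr (Sum.inr (Sum.inl i)) => cneg f i
  | Sum.inr (Sum.inr (Sum.inr (γ, _))) => e f (ppG f γ.1)

abbrev ιT : Type := GG f ⊕ ((LinIdx f × Fin 4) ⊕ (GMIdx f × Fin 6))

noncomputable instance : DecidableEq (ιT f) := Classical.decEq _

noncomputable def Wv : ιT f → GG f → ℝ
  | Sum.inl g => e f (slT f g)
  | Sum.inr (Sum.inl (ℓ, k)) =>
    if k = 0 then fun g => linA f ℓ g + e f (padG f ℓ 0) g
    else if k = 1 then fun g => linB f L U ℓ g + e f (padG f ℓ 1) g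
    else if k = 2 then e f (padG f ℓ 0)
    else e f (padG f ℓ 1)
  | Sum.inr (Sum.inr (γ, k)) =>
    if k = 0 then e f (gmA f γ)
    else if k = 1 then e f (gmB f γ)
    else if k = 2 then e f (ppG f γ.1)
    else if k = 3 then e f (ppG f γ.1)
    else if k = 4 then e f (dG f γ 0)
    else e f (dG f γ 1)

noncomputable def Av : ιT f → GG f → ℝ
  | Sum.inl g => e f (slT f g)
  | Sum.inr (Sum.inl (ℓ, k)) =>
    if k = 0 then fun g => linB f L U ℓ g + e f (padG f ℓ 1) g
    else if k = 1 then fun g => linA f ℓ g + e f (padG f ℓ 0) g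
    else if k = 2 then e f (padG f ℓ 1)
    else e f (padG f ℓ 0)
  | Sum.inr (Sum.inr (γ, k)) =>
    if k = 0 then fun g => e f (dG f γ 0) g + e f (gmA f γ) g
    else if k = 1 then fun g => e f (dG f γ 0) g + e f (gmB f γ) g
    else if k = 2 then fun g => e f (dG f γ 1) g + e f (gmA f γ) g
    else if k = 3 then fun g => e f (dG f γ 1) g + e f (gmB f γ) g
    else if k = 4 then e f (ppG f γ.1)
    else e f (ppG f γ.1)

lemma cpos_nonneg (i : Fin m) (g : GG f) : 0 ≤ cpos f i g := by
  unfold cpos; match g with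
  | Sum.inr (Sum.inl (Sum.inl a)) => exact le_max_right _ _
  | Sum.inl g => exact le_refl 0
  | Sum.inr (Sum.inl (Sum.inr a)) => exact le_refl 0
  | Sum.inr (Sum.inr g) => exact le_refl 0

lemma cneg_nonneg (i : Fin m) (g : GG f) : 0 ≤ cneg f i g := by
  unfold cneg; match g with
  | Sum.inr (Sum.inl (Sum.inl a)) => exact le_max_right _ _
  | Sum.inl g => exact le_refl 0
  | Sum.inr (Sum.inl (Sum.inr a)) => exact le_refl 0
  | Sum.inr (Sum.inr g) => exact le_refl 0

lemma cpos_sub_cneg (i : Fin m) (a : Mon f) :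
    cpos f i (monG f a) - cneg f i (monG f a) = (((gpoly f i).coeff a.1 : ℚ) : ℝ) := by
  show max (((gpoly f i).coeff a.1 : ℚ) : ℝ) 0 - max (-(((gpoly f i).coeff a.1 : ℚ) : ℝ)) 0
    = (((gpoly f i).coeff a.1 : ℚ) : ℝ)
  rcases le_or_gt 0 ((((gpoly f i).coeff a.1 : ℚ) : ℝ)) with h | h
  · rw [max_eq_left h, max_eq_right (by linarith)]; ring
  · rw [max_eq_right h.le, max_eq_left (by linarith)]; ring

lemma hLU_nonneg (hLU : ∀ j, 0 ≤ L j ∧ L j ≤ U j) (j : Fin n) :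
    (0:ℝ) ≤ (L j : ℝ) ∧ (0:ℝ) ≤ (U j : ℝ) := by
  have h := hLU j
  constructor
  · exact_mod_cast h.1
  · exact_mod_cast le_trans h.1 h.2

lemma linA_nonneg (ℓ : LinIdx f) (g : GG f) : 0 ≤ linA f ℓ g := by
  unfold linA
  match ℓ with
  | Sum.inl (j, k) =>
    dsimp only
    split
    · exact e_nonneg f _ _
    · split
      · exact e_nonneg f _ _
      · exact add_nonneg (e_nonneg f _ _) (e_nonneg f _ _)
  | Sum.inr (Sum.inl _) => exact e_nonneg f _ _
  | Sum.inr (Sum.inr (Sum.inl i)) => exact cpos_nonneg f i g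
  | Sum.inr (Sum.inr (Sum.inr (γ, k))) => exact e_nonneg f _ _

lemma linB_nonneg (hLU : ∀ j, 0 ≤ L j ∧ L j ≤ U j) (ℓ : LinIdx f) (g : GG f) :
    0 ≤ linB f L U ℓ g := by
  unfold linB
  match ℓ with
  | Sum.inl (j, k) =>
    dsimp only
    split
    · exact add_nonneg (e_nonneg f _ _) (e_nonneg f _ _)
    · split
      · exact add_nonneg (mul_nonneg (hLU_nonneg L U hLU j).1 (e_nonneg f _ _))
          (e_nonneg f _ _)
      · exact mul_nonneg (hLU_nonneg L U hLU j).2 (e_nonneg f _ _)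
  | Sum.inr (Sum.inl _) => exact e_nonneg f _ _
  | Sum.inr (Sum.inr (Sum.inl i)) => exact cneg_nonneg f i g
  | Sum.inr (Sum.inr (Sum.inr (γ, k))) => exact e_nonneg f _ _

lemma Wv_nonneg (hLU : ∀ j, 0 ≤ L j ∧ L j ≤ U j) (i : ιT f) (g : GG f) :
    0 ≤ Wv f L U i g := by
  unfold Wv
  match i with
  | Sum.inl g' => exact e_nonneg f _ _
  | Sum.inr (Sum.inl (ℓ, k)) =>
    dsimp only
    split_ifs <;>
      first
        | exact add_nonneg (linA_nonneg f ℓ g) (e_nonneg f _ _)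
        | exact add_nonneg (linB_nonneg f L U hLU ℓ g) (e_nonneg f _ _)
        | exact e_nonneg f _ _
  | Sum.inr (Sum.inr (γ, k)) =>
    dsimp only
    split_ifs <;> exact e_nonneg f _ _

lemma Av_nonneg (hLU : ∀ j, 0 ≤ L j ∧ L j ≤ U j) (i : ιT f) (g : GG f) :
    0 ≤ Av f L U i g := by
  unfold Av
  match i with
  | Sum.inl g' => exact e_nonneg f _ _
  | Sum.inr (Sum.inl (ℓ, k)) =>
    dsimp only
    split_ifs <;>
      first
        | exact add_nonneg (linA_nonneg f ℓ g) (e_nonneg f _ _)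
        | exact add_nonneg (linB_nonneg f L U hLU ℓ g) (e_nonneg f _ _)
        | exact e_nonneg f _ _
  | Sum.inr (Sum.inr (γ, k)) =>
    dsimp only
    split_ifs <;>
      first
        | exact add_nonneg (e_nonneg f _ _) (e_nonneg f _ _)
        | exact e_nonneg f _ _

end PL2

namespace PL2
open MvPolynomial

variable {m n : ℕ} (f : Fin m → MvPolynomial (Fin n) ℚ) (L U : Fin n → ℚ)

noncomputable def Bv (p : GG f → ℝ) (i : ιT f) : ℝ := ∑ g, p g * Wv f L U i g
noncomputable def Cv (p : GG f → ℝ) (i : ιT f) : ℝ := ∑ g, p g * Av f L U i g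
noncomputable def PA (p : GG f → ℝ) (ℓ : LinIdx f) : ℝ := ∑ g, p g * linA f ℓ g
noncomputable def PB (p : GG f → ℝ) (ℓ : LinIdx f) : ℝ := ∑ g, p g * linB f L U ℓ g

lemma slT_idem (g : GG f) : slT f (slT f g) = slT f g := by
  rcases slT_cases f g with h | h <;> simp [h]

/- ### vanishing lemmas -/

lemma cpos_eval (i : Fin m) (a : Mon f) :
    cpos f i (monG f a) = max (((gpoly f i).coeff a.1 : ℚ) : ℝ) 0 := rfl
lemma cneg_eval (i : Fin m) (a : Mon f) :
    cneg f i (monG f a) = max (-(((gpoly f i).coeff a.1 : ℚ) : ℝ)) 0 := rfl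

lemma cpos_pad (i : Fin m) (ℓ : LinIdx f) (k : Fin 2) : cpos f i (padG f ℓ k) = 0 := rfl
lemma cneg_pad (i : Fin m) (ℓ : LinIdx f) (k : Fin 2) : cneg f i (padG f ℓ k) = 0 := rfl
lemma cpos_dG (i : Fin m) (γ : GMIdx f) (k : Fin 2) : cpos f i (dG f γ k) = 0 := rfl
lemma cneg_dG (i : Fin m) (γ : GMIdx f) (k : Fin 2) : cneg f i (dG f γ k) = 0 := rfl

lemma linA_pad (ℓ ℓ' : LinIdx f) (k : Fin 2) : linA f ℓ (padG f ℓ' k) = 0 := by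
  unfold linA
  match ℓ with
  | Sum.inl (j, k') =>
    dsimp only
    split_ifs <;> simp [e, padG, zG, vG, wG]
  | Sum.inr (Sum.inl _) => simp [e, padG, monG]
  | Sum.inr (Sum.inr (Sum.inl i)) => exact cpos_pad f i ℓ' k
  | Sum.inr (Sum.inr (Sum.inr (γ, k''))) => simp [e, padG, dG]

lemma linB_pad (ℓ ℓ' : LinIdx f) (k : Fin 2) : linB f L U ℓ (padG f ℓ' k) = 0 := by
  unfold linB
  match ℓ with
  | Sum.inl (j, k') =>
    dsimp only
    split_ifs <;> simp [e, padG, sG, vG, uG]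
  | Sum.inr (Sum.inl _) => simp [e, padG, sG]
  | Sum.inr (Sum.inr (Sum.inl i)) => exact cneg_pad f i ℓ' k
  | Sum.inr (Sum.inr (Sum.inr (γ, k''))) => simp [e, padG, ppG]

lemma linB_dG (ℓ : LinIdx f) (γ : GMIdx f) (k : Fin 2) : linB f L U ℓ (dG f γ k) = 0 := by
  unfold linB
  match ℓ with
  | Sum.inl (j, k') =>
    dsimp only
    split_ifs <;> simp [e, dG, sG, vG, uG]
  | Sum.inr (Sum.inl _) => simp [e, dG, sG]
  | Sum.inr (Sum.inr (Sum.inl i)) => exact cneg_dG f i γ k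
  | Sum.inr (Sum.inr (Sum.inr (γ', k''))) => simp [e, dG, ppG]

lemma linA_dG (ℓ : LinIdx f) (γ : GMIdx f) (k : Fin 2) :
    linA f ℓ (dG f γ k) = if ℓ = Sum.inr (Sum.inr (Sum.inr (γ, k))) then 1 else 0 := by
  unfold linA
  match ℓ with
  | Sum.inl (j, k') =>
    rw [if_neg (by simp)]
    dsimp only
    split_ifs <;> simp [e, dG, zG, vG, wG]
  | Sum.inr (Sum.inl u') =>
    rw [if_neg (by simp)]
    simp [e, dG, monG]
  | Sum.inr (Sum.inr (Sum.inl i)) =>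
    rw [if_neg (by simp)]
    exact cpos_dG f i γ k
  | Sum.inr (Sum.inr (Sum.inr (γ', k''))) =>
    by_cases h : γ' = γ ∧ k'' = k
    · rw [h.1, h.2, if_pos rfl]
      exact e_self f _
    · rw [if_neg (by simp; intro h1 h2; exact h ⟨h1, h2⟩)]
      refine e_ne f ?_
      simp only [dG, ne_eq, Sum.inr.injEq, Sum.inl.injEq, Prod.mk.injEq]
      intro hh
      exact h ⟨hh.1.symm ▸ rfl, hh.2.symm ▸ rfl⟩

lemma gmA_ne_dG (γ γ' : GMIdx f) (k : Fin 2) : gmA f γ ≠ dG f γ' k := by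
  unfold gmA
  split_ifs <;> simp [monG, dG]

lemma gmB_ne_dG (γ γ' : GMIdx f) (k : Fin 2) : gmB f γ ≠ dG f γ' k := by
  unfold gmB
  split_ifs <;> simp [zG, sG, dG]

lemma gmA_ne_pad (γ : GMIdx f) (ℓ : LinIdx f) (k : Fin 2) : gmA f γ ≠ padG f ℓ k := by
  unfold gmA
  split_ifs <;> simp [monG, padG]

lemma gmB_ne_pad (γ : GMIdx f) (ℓ : LinIdx f) (k : Fin 2) : gmB f γ ≠ padG f ℓ k := by
  unfold gmB
  split_ifs <;> simp [zG, sG, padG]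

/- ### budget and cost computations -/

lemma sum_p_add (p F G' : GG f → ℝ) :
    ∑ g, p g * (F g + G' g) = (∑ g, p g * F g) + ∑ g, p g * G' g := by
  rw [← Finset.sum_add_distrib]
  exact Finset.sum_congr rfl fun g _ => by ring

lemma Bv_sl (p : GG f → ℝ) (g : GG f) : Bv f L U p (Sum.inl g) = p (slT f g) := by
  simp only [Bv, Wv]; exact sum_pe f p _

lemma Cv_sl (p : GG f → ℝ) (g : GG f) : Cv f L U p (Sum.inl g) = p (slT f g) := by
  simp only [Cv, Av]; exact sum_pe f p _

lemma Bv_lin (p : GG f → ℝ) (ℓ : LinIdx f) :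
    (Bv f L U p (Sum.inr (Sum.inl (ℓ, 0))) = PA f p ℓ + p (padG f ℓ 0)) ∧
    (Bv f L U p (Sum.inr (Sum.inl (ℓ, 1))) = PB f L U p ℓ + p (padG f ℓ 1)) ∧
    (Bv f L U p (Sum.inr (Sum.inl (ℓ, 2))) = p (padG f ℓ 0)) ∧
    (Bv f L U p (Sum.inr (Sum.inl (ℓ, 3))) = p (padG f ℓ 1)) := by
  refine ⟨?_, ?_, ?_, ?_⟩
  · show (∑ g, p g * (linA f ℓ g + e f (padG f ℓ 0) g)) = _
    rw [sum_p_add f p _ _, sum_pe f p _]; rfl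
  · show (∑ g, p g * (linB f L U ℓ g + e f (padG f ℓ 1) g)) = _
    rw [sum_p_add f p _ _, sum_pe f p _]; rfl
  · show (∑ g, p g * e f (padG f ℓ 0) g) = _
    rw [sum_pe f p _]
  · show (∑ g, p g * e f (padG f ℓ 1) g) = _
    rw [sum_pe f p _]

lemma Cv_lin (p : GG f → ℝ) (ℓ : LinIdx f) :
    (Cv f L U p (Sum.inr (Sum.inl (ℓ, 0))) = PB f L U p ℓ + p (padG f ℓ 1)) ∧
    (Cv f L U p (Sum.inr (Sum.inl (ℓ, 1))) = PA f p ℓ + p (padG f ℓ 0)) ∧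
    (Cv f L U p (Sum.inr (Sum.inl (ℓ, 2))) = p (padG f ℓ 1)) ∧
    (Cv f L U p (Sum.inr (Sum.inl (ℓ, 3))) = p (padG f ℓ 0)) := by
  refine ⟨?_, ?_, ?_, ?_⟩
  · show (∑ g, p g * (linB f L U ℓ g + e f (padG f ℓ 1) g)) = _
    rw [sum_p_add f p _ _, sum_pe f p _]; rfl
  · show (∑ g, p g * (linA f ℓ g + e f (padG f ℓ 0) g)) = _
    rw [sum_p_add f p _ _, sum_pe f p _]; rfl
  · show (∑ g, p g * e f (padG f ℓ 1) g) = _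
    rw [sum_pe f p _]
  · show (∑ g, p g * e f (padG f ℓ 0) g) = _
    rw [sum_pe f p _]

lemma Bv_gm (p : GG f → ℝ) (γ : GMIdx f) :
    (Bv f L U p (Sum.inr (Sum.inr (γ, 0))) = p (gmA f γ)) ∧
    (Bv f L U p (Sum.inr (Sum.inr (γ, 1))) = p (gmB f γ)) ∧
    (Bv f L U p (Sum.inr (Sum.inr (γ, 2))) = p (ppG f γ.1)) ∧
    (Bv f L U p (Sum.inr (Sum.inr (γ, 3))) = p (ppG f γ.1)) ∧
    (Bv f L U p (Sum.inr (Sum.inr (γ, 4))) = p (dG f γ 0)) ∧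
    (Bv f L U p (Sum.inr (Sum.inr (γ, 5))) = p (dG f γ 1)) := by
  refine ⟨?_, ?_, ?_, ?_, ?_, ?_⟩
  · show (∑ g, p g * e f (gmA f γ) g) = _
    rw [sum_pe f p _]
  · show (∑ g, p g * e f (gmB f γ) g) = _
    rw [sum_pe f p _]
  · show (∑ g, p g * e f (ppG f γ.1) g) = _
    rw [sum_pe f p _]
  · show (∑ g, p g * e f (ppG f γ.1) g) = _
    rw [sum_pe f p _]
  · show (∑ g, p g * e f (dG f γ 0) g) = _
    rw [sum_pe f p _]
  · show (∑ g, p g * e f (dG f γ 1) g) = _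
    rw [sum_pe f p _]

lemma Cv_gm (p : GG f → ℝ) (γ : GMIdx f) :
    (Cv f L U p (Sum.inr (Sum.inr (γ, 0))) = p (dG f γ 0) + p (gmA f γ)) ∧
    (Cv f L U p (Sum.inr (Sum.inr (γ, 1))) = p (dG f γ 0) + p (gmB f γ)) ∧
    (Cv f L U p (Sum.inr (Sum.inr (γ, 2))) = p (dG f γ 1) + p (gmA f γ)) ∧
    (Cv f L U p (Sum.inr (Sum.inr (γ, 3))) = p (dG f γ 1) + p (gmB f γ)) ∧
    (Cv f L U p (Sum.inr (Sum.inr (γ, 4))) = p (ppG f γ.1)) ∧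
    (Cv f L U p (Sum.inr (Sum.inr (γ, 5))) = p (ppG f γ.1)) := by
  refine ⟨?_, ?_, ?_, ?_, ?_, ?_⟩
  · show (∑ g, p g * (e f (dG f γ 0) g + e f (gmA f γ) g)) = _
    rw [sum_p_add f p _ _, sum_pe f p _, sum_pe f p _]
  · show (∑ g, p g * (e f (dG f γ 0) g + e f (gmB f γ) g)) = _
    rw [sum_p_add f p _ _, sum_pe f p _, sum_pe f p _]
  · show (∑ g, p g * (e f (dG f γ 1) g + e f (gmA f γ) g)) = _
    rw [sum_p_add f p _ _, sum_pe f p _, sum_pe f p _]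
  · show (∑ g, p g * (e f (dG f γ 1) g + e f (gmB f γ) g)) = _
    rw [sum_p_add f p _ _, sum_pe f p _, sum_pe f p _]
  · show (∑ g, p g * e f (ppG f γ.1) g) = _
    rw [sum_pe f p _]
  · show (∑ g, p g * e f (ppG f γ.1) g) = _
    rw [sum_pe f p _]


lemma padG_inj (ℓ ℓ' : LinIdx f) (k k' : Fin 2) :
    padG f ℓ k = padG f ℓ' k' ↔ ℓ = ℓ' ∧ k = k' := by
  simp [padG]

lemma dG_inj (γ γ' : GMIdx f) (k k' : Fin 2) :
    dG f γ k = dG f γ' k' ↔ γ = γ' ∧ k = k' := by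
  simp [dG]

lemma slT_gmA (γ : GMIdx f) : slT f (gmA f γ) = gmA f γ := by
  unfold gmA; split_ifs <;> rfl

lemma slT_gmB (γ : GMIdx f) : slT f (gmB f γ) = gmB f γ := by
  unfold gmB; split_ifs
  · exact slT_zG f _
  · rfl

/-- witness: an `slT`-fixed good with demand coefficient at least 1 -/
lemma Av_wit (i : ιT f) : ∃ g, slT f g = g ∧ 1 ≤ Av f L U i g := by
  match i with
  | Sum.inl g' =>
    refine ⟨slT f g', slT_idem f g', ?_⟩
    rw [show Av f L U (Sum.inl g') = e f (slT f g') from rfl, e_self]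
  | Sum.inr (Sum.inl (ℓ, k)) =>
    fin_cases k
    · refine ⟨padG f ℓ 1, slT_padG f ℓ 1, ?_⟩
      show 1 ≤ linB f L U ℓ (padG f ℓ 1) + e f (padG f ℓ 1) (padG f ℓ 1)
      rw [linB_pad, e_self]; norm_num
    · refine ⟨padG f ℓ 0, slT_padG f ℓ 0, ?_⟩
      show 1 ≤ linA f ℓ (padG f ℓ 0) + e f (padG f ℓ 0) (padG f ℓ 0)
      rw [linA_pad, e_self]; norm_num
    · refine ⟨padG f ℓ 1, slT_padG f ℓ 1, ?_⟩
      show 1 ≤ e f (padG f ℓ 1) (padG f ℓ 1)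
      rw [e_self]
    · refine ⟨padG f ℓ 0, slT_padG f ℓ 0, ?_⟩
      show 1 ≤ e f (padG f ℓ 0) (padG f ℓ 0)
      rw [e_self]
  | Sum.inr (Sum.inr (γ, k)) =>
    fin_cases k
    · refine ⟨dG f γ 0, slT_dG f γ 0, ?_⟩
      show 1 ≤ e f (dG f γ 0) (dG f γ 0) + e f (gmA f γ) (dG f γ 0)
      rw [e_self, e_ne f (gmA_ne_dG f γ γ 0).symm]; norm_num
    · refine ⟨dG f γ 0, slT_dG f γ 0, ?_⟩
      show 1 ≤ e f (dG f γ 0) (dG f γ 0) + e f (gmB f γ) (dG f γ 0)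
      rw [e_self, e_ne f (gmB_ne_dG f γ γ 0).symm]; norm_num
    · refine ⟨dG f γ 1, slT_dG f γ 1, ?_⟩
      show 1 ≤ e f (dG f γ 1) (dG f γ 1) + e f (gmA f γ) (dG f γ 1)
      rw [e_self, e_ne f (gmA_ne_dG f γ γ 1).symm]; norm_num
    · refine ⟨dG f γ 1, slT_dG f γ 1, ?_⟩
      show 1 ≤ e f (dG f γ 1) (dG f γ 1) + e f (gmB f γ) (dG f γ 1)
      rw [e_self, e_ne f (gmB_ne_dG f γ γ 1).symm]; norm_num
    · refine ⟨ppG f γ.1, slT_ppG f γ.1, ?_⟩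
      show 1 ≤ e f (ppG f γ.1) (ppG f γ.1)
      rw [e_self]
    · refine ⟨ppG f γ.1, slT_ppG f γ.1, ?_⟩
      show 1 ≤ e f (ppG f γ.1) (ppG f γ.1)
      rw [e_self]

lemma Cv_pos (hLU : ∀ j, 0 ≤ L j ∧ L j ≤ U j) (p : GG f → ℝ) (hp : ∀ g, 0 ≤ p g)
    (hps : ∀ g, slT f g = g → 0 < p g) (i : ιT f) : 0 < Cv f L U p i := by
  obtain ⟨g₀, h1, h2⟩ := Av_wit f L U i
  refine Finset.sum_pos' (fun g _ => mul_nonneg (hp g) (Av_nonneg f L U hLU i g)) ?_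
  refine ⟨g₀, Finset.mem_univ _, ?_⟩
  have := hps g₀ h1
  nlinarith

lemma Bv_nonneg (hLU : ∀ j, 0 ≤ L j ∧ L j ≤ U j) (p : GG f → ℝ) (hp : ∀ g, 0 ≤ p g)
    (i : ιT f) : 0 ≤ Bv f L U p i :=
  Finset.sum_nonneg (fun g _ => mul_nonneg (hp g) (Wv_nonneg f L U hLU i g))

/- ### decomposition of sums over agents -/

lemma sum_iota (F : ιT f → ℝ) :
    ∑ i, F i = (∑ g : GG f, F (Sum.inl g))
      + ((∑ ℓ : LinIdx f, ∑ k : Fin 4, F (Sum.inr (Sum.inl (ℓ, k))))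
      + (∑ γ : GMIdx f, ∑ k : Fin 6, F (Sum.inr (Sum.inr (γ, k))))) := by
  rw [Fintype.sum_sum_type F,
    Fintype.sum_sum_type (fun x : (LinIdx f × Fin 4) ⊕ (GMIdx f × Fin 6) => F (Sum.inr x)),
    Fintype.sum_prod_type (f := fun x : LinIdx f × Fin 4 => F (Sum.inr (Sum.inl x))),
    Fintype.sum_prod_type (f := fun x : GMIdx f × Fin 6 => F (Sum.inr (Sum.inr x)))]

lemma sum_sl_part (c : GG f → ℝ) (g₀ : GG f) (h0 : slT f g₀ = g₀) (hs : g₀ ≠ sG f) :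
    ∑ g : GG f, c g * e f (slT f g) g₀ = c g₀ := by
  rw [Finset.sum_eq_single g₀]
  · rw [h0, e_self, mul_one]
  · intro g _ hg
    rcases slT_cases f g with h | h
    · rw [h, e_ne f (Ne.symm hg), mul_zero]
    · rw [h, e_ne f hs, mul_zero]
  · intro h; exact absurd (Finset.mem_univ g₀) h

/-- demand sum at a pad good -/
lemma sum_A_pad (t : ιT f → ℝ) (ℓ₀ : LinIdx f) (κ : Fin 2) :
    ∑ i, t i * Av f L U i (padG f ℓ₀ κ)
      = t (Sum.inl (padG f ℓ₀ κ))
        + (if κ = 1 then t (Sum.inr (Sum.inl (ℓ₀, 0))) + t (Sum.inr (Sum.inl (ℓ₀, 2)))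
           else t (Sum.inr (Sum.inl (ℓ₀, 1))) + t (Sum.inr (Sum.inl (ℓ₀, 3)))) := by
  rw [sum_iota]
  have h1 : ∑ g : GG f, t (Sum.inl g) * Av f L U (Sum.inl g) (padG f ℓ₀ κ)
      = t (Sum.inl (padG f ℓ₀ κ)) :=
    sum_sl_part f (fun g => t (Sum.inl g)) (padG f ℓ₀ κ) (slT_padG f ℓ₀ κ) (by simp [padG, sG])
  have h3 : ∀ γ : GMIdx f, ∀ k : Fin 6,
      Av f L U (Sum.inr (Sum.inr (γ, k))) (padG f ℓ₀ κ) = 0 := by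
    intro γ k
    fin_cases k
    · show e f (dG f γ 0) _ + e f (gmA f γ) _ = 0
      rw [e_ne f (by simp [padG, dG]), e_ne f (gmA_ne_pad f γ ℓ₀ κ).symm]; ring
    · show e f (dG f γ 0) _ + e f (gmB f γ) _ = 0
      rw [e_ne f (by simp [padG, dG]), e_ne f (gmB_ne_pad f γ ℓ₀ κ).symm]; ring
    · show e f (dG f γ 1) _ + e f (gmA f γ) _ = 0
      rw [e_ne f (by simp [padG, dG]), e_ne f (gmA_ne_pad f γ ℓ₀ κ).symm]; ring
    · show e f (dG f γ 1) _ + e f (gmB f γ) _ = 0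
      rw [e_ne f (by simp [padG, dG]), e_ne f (gmB_ne_pad f γ ℓ₀ κ).symm]; ring
    · show e f (ppG f γ.1) _ = 0
      exact e_ne f (by simp [padG, ppG])
    · show e f (ppG f γ.1) _ = 0
      exact e_ne f (by simp [padG, ppG])
  have h3' : ∑ γ : GMIdx f, ∑ k : Fin 6,
      t (Sum.inr (Sum.inr (γ, k))) * Av f L U (Sum.inr (Sum.inr (γ, k))) (padG f ℓ₀ κ) = 0 := by
    refine Finset.sum_eq_zero (fun γ _ => Finset.sum_eq_zero (fun k _ => ?_))
    rw [h3 γ k, mul_zero]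
  have h2 : ∑ ℓ : LinIdx f, ∑ k : Fin 4,
      t (Sum.inr (Sum.inl (ℓ, k))) * Av f L U (Sum.inr (Sum.inl (ℓ, k))) (padG f ℓ₀ κ)
      = (if κ = 1 then t (Sum.inr (Sum.inl (ℓ₀, 0))) + t (Sum.inr (Sum.inl (ℓ₀, 2)))
         else t (Sum.inr (Sum.inl (ℓ₀, 1))) + t (Sum.inr (Sum.inl (ℓ₀, 3)))) := by
    rw [Finset.sum_eq_single ℓ₀]
    · rw [Fin.sum_univ_four]
      have e0 : Av f L U (Sum.inr (Sum.inl (ℓ₀, 0))) (padG f ℓ₀ κ)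
          = if κ = 1 then 1 else 0 := by
        show linB f L U ℓ₀ _ + e f (padG f ℓ₀ 1) _ = _
        rw [linB_pad, zero_add]
        by_cases h : κ = 1
        · rw [h, e_self, if_pos rfl]
        · rw [e_ne f (by simp [padG_inj, h]), if_neg h]
      have e1 : Av f L U (Sum.inr (Sum.inl (ℓ₀, 1))) (padG f ℓ₀ κ)
          = if κ = 0 then 1 else 0 := by
        show linA f ℓ₀ _ + e f (padG f ℓ₀ 0) _ = _
        rw [linA_pad, zero_add]
        by_cases h : κ = 0
        · rw [h, e_self, if_pos rfl]
        · rw [e_ne f (by simp [padG_inj, h]), if_neg h]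
      have e2 : Av f L U (Sum.inr (Sum.inl (ℓ₀, 2))) (padG f ℓ₀ κ)
          = if κ = 1 then 1 else 0 := by
        show e f (padG f ℓ₀ 1) _ = _
        by_cases h : κ = 1
        · rw [h, e_self, if_pos rfl]
        · rw [e_ne f (by simp [padG_inj, h]), if_neg h]
      have e3 : Av f L U (Sum.inr (Sum.inl (ℓ₀, 3))) (padG f ℓ₀ κ)
          = if κ = 0 then 1 else 0 := by
        show e f (padG f ℓ₀ 0) _ = _
        by_cases h : κ = 0
        · rw [h, e_self, if_pos rfl]
        · rw [e_ne f (by simp [padG_inj, h]), if_neg h]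
      rw [e0, e1, e2, e3]
      have hκ : κ = 0 ∨ κ = 1 := by omega
      rcases hκ with h | h <;> subst h <;> norm_num
    · intro ℓ _ hℓ
      refine Finset.sum_eq_zero (fun k _ => ?_)
      have hA : Av f L U (Sum.inr (Sum.inl (ℓ, k))) (padG f ℓ₀ κ) = 0 := by
        fin_cases k
        · show linB f L U ℓ _ + e f (padG f ℓ 1) _ = 0
          rw [linB_pad, e_ne f (by simp [padG_inj]; intro h; exact absurd h.symm hℓ)]; ring
        · show linA f ℓ _ + e f (padG f ℓ 0) _ = 0
          rw [linA_pad, e_ne f (by simp [padG_inj]; intro h; exact absurd h.symm hℓ)]; ring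
        · show e f (padG f ℓ 1) _ = 0
          exact e_ne f (by simp [padG_inj]; intro h; exact absurd h.symm hℓ)
        · show e f (padG f ℓ 0) _ = 0
          exact e_ne f (by simp [padG_inj]; intro h; exact absurd h.symm hℓ)
      rw [hA, mul_zero]
    · intro h; exact absurd (Finset.mem_univ ℓ₀) h
  rw [h1, h2, h3', add_zero]

/-- supply sum at a pad good -/
lemma sum_W_pad (ℓ₀ : LinIdx f) (κ : Fin 2) :
    ∑ i, Wv f L U i (padG f ℓ₀ κ) = 3 := by
  rw [sum_iota]
  have h1 : ∑ g : GG f, Wv f L U (Sum.inl g) (padG f ℓ₀ κ) = 1 := by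
    have := sum_sl_part f (fun _ => (1:ℝ)) (padG f ℓ₀ κ) (slT_padG f ℓ₀ κ)
      (by simp [padG, sG])
    simpa only [one_mul, Wv] using this
  have h3' : ∑ γ : GMIdx f, ∑ k : Fin 6,
      Wv f L U (Sum.inr (Sum.inr (γ, k))) (padG f ℓ₀ κ) = 0 := by
    refine Finset.sum_eq_zero (fun γ _ => Finset.sum_eq_zero (fun k _ => ?_))
    fin_cases k
    · exact e_ne f (gmA_ne_pad f γ ℓ₀ κ).symm
    · exact e_ne f (gmB_ne_pad f γ ℓ₀ κ).symm
    · exact e_ne f (by simp [padG, ppG])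
    · exact e_ne f (by simp [padG, ppG])
    · exact e_ne f (by simp [padG, dG])
    · exact e_ne f (by simp [padG, dG])
  have h2 : ∑ ℓ : LinIdx f, ∑ k : Fin 4,
      Wv f L U (Sum.inr (Sum.inl (ℓ, k))) (padG f ℓ₀ κ) = 2 := by
    rw [Finset.sum_eq_single ℓ₀]
    · rw [Fin.sum_univ_four]
      have e0 : Wv f L U (Sum.inr (Sum.inl (ℓ₀, 0))) (padG f ℓ₀ κ)
          = if κ = 0 then 1 else 0 := by
        show linA f ℓ₀ _ + e f (padG f ℓ₀ 0) _ = _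
        rw [linA_pad, zero_add]
        by_cases h : κ = 0
        · rw [h, e_self, if_pos rfl]
        · rw [e_ne f (by simp [padG_inj, h]), if_neg h]
      have e1 : Wv f L U (Sum.inr (Sum.inl (ℓ₀, 1))) (padG f ℓ₀ κ)
          = if κ = 1 then 1 else 0 := by
        show linB f L U ℓ₀ _ + e f (padG f ℓ₀ 1) _ = _
        rw [linB_pad, zero_add]
        by_cases h : κ = 1
        · rw [h, e_self, if_pos rfl]
        · rw [e_ne f (by simp [padG_inj, h]), if_neg h]
      have e2 : Wv f L U (Sum.inr (Sum.inl (ℓ₀, 2))) (padG f ℓ₀ κ)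
          = if κ = 0 then 1 else 0 := by
        show e f (padG f ℓ₀ 0) _ = _
        by_cases h : κ = 0
        · rw [h, e_self, if_pos rfl]
        · rw [e_ne f (by simp [padG_inj, h]), if_neg h]
      have e3 : Wv f L U (Sum.inr (Sum.inl (ℓ₀, 3))) (padG f ℓ₀ κ)
          = if κ = 1 then 1 else 0 := by
        show e f (padG f ℓ₀ 1) _ = _
        by_cases h : κ = 1
        · rw [h, e_self, if_pos rfl]
        · rw [e_ne f (by simp [padG_inj, h]), if_neg h]
      rw [e0, e1, e2, e3]
      have hκ : κ = 0 ∨ κ = 1 := by omega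
      rcases hκ with h | h <;> subst h <;> norm_num
    · intro ℓ _ hℓ
      refine Finset.sum_eq_zero (fun k _ => ?_)
      fin_cases k
      · show linA f ℓ _ + e f (padG f ℓ 0) _ = 0
        rw [linA_pad, e_ne f (by simp [padG_inj]; intro h; exact absurd h.symm hℓ)]; ring
      · show linB f L U ℓ _ + e f (padG f ℓ 1) _ = 0
        rw [linB_pad, e_ne f (by simp [padG_inj]; intro h; exact absurd h.symm hℓ)]; ring
      · show e f (padG f ℓ 0) _ = 0
        exact e_ne f (by simp [padG_inj]; intro h; exact absurd h.symm hℓ)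
      · show e f (padG f ℓ 1) _ = 0
        exact e_ne f (by simp [padG_inj]; intro h; exact absurd h.symm hℓ)
    · intro h; exact absurd (Finset.mem_univ ℓ₀) h
  rw [h1, h2, h3']
  norm_num



def pinIdx (γ : GMIdx f) (k : Fin 2) : LinIdx f := Sum.inr (Sum.inr (Sum.inr (γ, k)))

/-- demand sum at a `D`-good -/
lemma sum_A_dG (t : ιT f → ℝ) (γ₀ : GMIdx f) :
    ∑ i, t i * Av f L U i (dG f γ₀ 0)
      = t (Sum.inl (dG f γ₀ 0)) + (t (Sum.inr (Sum.inl (pinIdx f γ₀ 0, 1)))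
        + (t (Sum.inr (Sum.inr (γ₀, 0))) + t (Sum.inr (Sum.inr (γ₀, 1))))) := by
  rw [sum_iota]
  have h1 : ∑ g : GG f, t (Sum.inl g) * Av f L U (Sum.inl g) (dG f γ₀ 0)
      = t (Sum.inl (dG f γ₀ 0)) :=
    sum_sl_part f (fun g => t (Sum.inl g)) (dG f γ₀ 0) (slT_dG f γ₀ 0) (by simp [dG, sG])
  have h2 : ∑ ℓ : LinIdx f, ∑ k : Fin 4,
      t (Sum.inr (Sum.inl (ℓ, k))) * Av f L U (Sum.inr (Sum.inl (ℓ, k))) (dG f γ₀ 0)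
      = t (Sum.inr (Sum.inl (pinIdx f γ₀ 0, 1))) := by
    have hinner : ∀ ℓ : LinIdx f, ∑ k : Fin 4,
        t (Sum.inr (Sum.inl (ℓ, k))) * Av f L U (Sum.inr (Sum.inl (ℓ, k))) (dG f γ₀ 0)
        = if ℓ = pinIdx f γ₀ 0 then t (Sum.inr (Sum.inl (ℓ, 1))) else 0 := by
      intro ℓ
      rw [Fin.sum_univ_four]
      have e0 : Av f L U (Sum.inr (Sum.inl (ℓ, 0))) (dG f γ₀ 0) = 0 := by
        show linB f L U ℓ _ + e f (padG f ℓ 1) _ = 0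
        rw [linB_dG, e_ne f (by simp [padG, dG])]; ring
      have e1 : Av f L U (Sum.inr (Sum.inl (ℓ, 1))) (dG f γ₀ 0)
          = if ℓ = pinIdx f γ₀ 0 then 1 else 0 := by
        show linA f ℓ _ + e f (padG f ℓ 0) _ = _
        rw [linA_dG, e_ne f (by simp [padG, dG]), add_zero]
        rfl
      have e2 : Av f L U (Sum.inr (Sum.inl (ℓ, 2))) (dG f γ₀ 0) = 0 := by
        show e f (padG f ℓ 1) _ = 0
        exact e_ne f (by simp [padG, dG])
      have e3 : Av f L U (Sum.inr (Sum.inl (ℓ, 3))) (dG f γ₀ 0) = 0 := by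
        show e f (padG f ℓ 0) _ = 0
        exact e_ne f (by simp [padG, dG])
      rw [e0, e1, e2, e3]
      by_cases h : ℓ = pinIdx f γ₀ 0 <;> simp [h]
    calc ∑ ℓ : LinIdx f, ∑ k : Fin 4,
        t (Sum.inr (Sum.inl (ℓ, k))) * Av f L U (Sum.inr (Sum.inl (ℓ, k))) (dG f γ₀ 0)
        = ∑ ℓ : LinIdx f, if ℓ = pinIdx f γ₀ 0 then t (Sum.inr (Sum.inl (ℓ, 1))) else 0 :=
          Finset.sum_congr rfl (fun ℓ _ => hinner ℓ)
      _ = t (Sum.inr (Sum.inl (pinIdx f γ₀ 0, 1))) := by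
          rw [Finset.sum_ite_eq' Finset.univ (pinIdx f γ₀ 0)
            (fun ℓ => t (Sum.inr (Sum.inl (ℓ, 1))))]
          simp
  have h3 : ∑ γ : GMIdx f, ∑ k : Fin 6,
      t (Sum.inr (Sum.inr (γ, k))) * Av f L U (Sum.inr (Sum.inr (γ, k))) (dG f γ₀ 0)
      = t (Sum.inr (Sum.inr (γ₀, 0))) + t (Sum.inr (Sum.inr (γ₀, 1))) := by
    have hinner : ∀ γ : GMIdx f, ∑ k : Fin 6,
        t (Sum.inr (Sum.inr (γ, k))) * Av f L U (Sum.inr (Sum.inr (γ, k))) (dG f γ₀ 0)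
        = if γ = γ₀ then t (Sum.inr (Sum.inr (γ, 0))) + t (Sum.inr (Sum.inr (γ, 1))) else 0 := by
      intro γ
      rw [Fin.sum_univ_six]
      have e0 : Av f L U (Sum.inr (Sum.inr (γ, 0))) (dG f γ₀ 0)
          = if γ = γ₀ then 1 else 0 := by
        show e f (dG f γ 0) _ + e f (gmA f γ) _ = _
        rw [e_ne f (gmA_ne_dG f γ γ₀ 0).symm, add_zero]
        by_cases h : γ = γ₀
        · rw [h, e_self, if_pos rfl]
        · rw [e_ne f (by simp [dG_inj]; intro hh; exact absurd hh.symm h), if_neg h]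
      have e1 : Av f L U (Sum.inr (Sum.inr (γ, 1))) (dG f γ₀ 0)
          = if γ = γ₀ then 1 else 0 := by
        show e f (dG f γ 0) _ + e f (gmB f γ) _ = _
        rw [e_ne f (gmB_ne_dG f γ γ₀ 0).symm, add_zero]
        by_cases h : γ = γ₀
        · rw [h, e_self, if_pos rfl]
        · rw [e_ne f (by simp [dG_inj]; intro hh; exact absurd hh.symm h), if_neg h]
      have e2 : Av f L U (Sum.inr (Sum.inr (γ, 2))) (dG f γ₀ 0) = 0 := by
        show e f (dG f γ 1) _ + e f (gmA f γ) _ = 0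
        rw [e_ne f (gmA_ne_dG f γ γ₀ 0).symm, e_ne f (by simp [dG_inj])]; ring
      have e3 : Av f L U (Sum.inr (Sum.inr (γ, 3))) (dG f γ₀ 0) = 0 := by
        show e f (dG f γ 1) _ + e f (gmB f γ) _ = 0
        rw [e_ne f (gmB_ne_dG f γ γ₀ 0).symm, e_ne f (by simp [dG_inj])]; ring
      have e4 : Av f L U (Sum.inr (Sum.inr (γ, 4))) (dG f γ₀ 0) = 0 := by
        show e f (ppG f γ.1) _ = 0
        exact e_ne f (by simp [dG, ppG])
      have e5 : Av f L U (Sum.inr (Sum.inr (γ, 5))) (dG f γ₀ 0) = 0 := by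
        show e f (ppG f γ.1) _ = 0
        exact e_ne f (by simp [dG, ppG])
      rw [e0, e1, e2, e3, e4, e5]
      by_cases h : γ = γ₀ <;> simp [h] <;> ring
    calc ∑ γ : GMIdx f, ∑ k : Fin 6,
        t (Sum.inr (Sum.inr (γ, k))) * Av f L U (Sum.inr (Sum.inr (γ, k))) (dG f γ₀ 0)
        = ∑ γ : GMIdx f, if γ = γ₀ then
            t (Sum.inr (Sum.inr (γ, 0))) + t (Sum.inr (Sum.inr (γ, 1))) else 0 :=
          Finset.sum_congr rfl (fun γ _ => hinner γ)
      _ = _ := by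
          rw [Finset.sum_ite_eq' Finset.univ γ₀
            (fun γ => t (Sum.inr (Sum.inr (γ, 0))) + t (Sum.inr (Sum.inr (γ, 1))))]
          simp
  rw [h1, h2, h3]

/-- supply sum at a `D`-good -/
lemma sum_W_dG (γ₀ : GMIdx f) :
    ∑ i, Wv f L U i (dG f γ₀ 0) = 3 := by
  rw [sum_iota]
  have h1 : ∑ g : GG f, Wv f L U (Sum.inl g) (dG f γ₀ 0) = 1 := by
    have := sum_sl_part f (fun _ => (1:ℝ)) (dG f γ₀ 0) (slT_dG f γ₀ 0) (by simp [dG, sG])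
    simpa only [one_mul, Wv] using this
  have h2 : ∑ ℓ : LinIdx f, ∑ k : Fin 4,
      Wv f L U (Sum.inr (Sum.inl (ℓ, k))) (dG f γ₀ 0) = 1 := by
    have hinner : ∀ ℓ : LinIdx f, ∑ k : Fin 4,
        Wv f L U (Sum.inr (Sum.inl (ℓ, k))) (dG f γ₀ 0)
        = if ℓ = pinIdx f γ₀ 0 then 1 else 0 := by
      intro ℓ
      rw [Fin.sum_univ_four]
      have e0 : Wv f L U (Sum.inr (Sum.inl (ℓ, 0))) (dG f γ₀ 0)
          = if ℓ = pinIdx f γ₀ 0 then 1 else 0 := by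
        show linA f ℓ _ + e f (padG f ℓ 0) _ = _
        rw [linA_dG, e_ne f (by simp [padG, dG]), add_zero]
        rfl
      have e1 : Wv f L U (Sum.inr (Sum.inl (ℓ, 1))) (dG f γ₀ 0) = 0 := by
        show linB f L U ℓ _ + e f (padG f ℓ 1) _ = 0
        rw [linB_dG, e_ne f (by simp [padG, dG])]; ring
      have e2 : Wv f L U (Sum.inr (Sum.inl (ℓ, 2))) (dG f γ₀ 0) = 0 := by
        show e f (padG f ℓ 0) _ = 0
        exact e_ne f (by simp [padG, dG])
      have e3 : Wv f L U (Sum.inr (Sum.inl (ℓ, 3))) (dG f γ₀ 0) = 0 := by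
        show e f (padG f ℓ 1) _ = 0
        exact e_ne f (by simp [padG, dG])
      rw [e0, e1, e2, e3]
      by_cases h : ℓ = pinIdx f γ₀ 0 <;> simp [h]
    calc ∑ ℓ : LinIdx f, ∑ k : Fin 4, Wv f L U (Sum.inr (Sum.inl (ℓ, k))) (dG f γ₀ 0)
        = ∑ ℓ : LinIdx f, if ℓ = pinIdx f γ₀ 0 then 1 else 0 :=
          Finset.sum_congr rfl (fun ℓ _ => hinner ℓ)
      _ = 1 := by
          rw [Finset.sum_ite_eq' Finset.univ (pinIdx f γ₀ 0) (fun _ => (1:ℝ))]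
          simp
  have h3 : ∑ γ : GMIdx f, ∑ k : Fin 6,
      Wv f L U (Sum.inr (Sum.inr (γ, k))) (dG f γ₀ 0) = 1 := by
    have hinner : ∀ γ : GMIdx f, ∑ k : Fin 6,
        Wv f L U (Sum.inr (Sum.inr (γ, k))) (dG f γ₀ 0)
        = if γ = γ₀ then 1 else 0 := by
      intro γ
      rw [Fin.sum_univ_six]
      have e0 : Wv f L U (Sum.inr (Sum.inr (γ, 0))) (dG f γ₀ 0) = 0 :=
        e_ne f (gmA_ne_dG f γ γ₀ 0).symm
      have e1 : Wv f L U (Sum.inr (Sum.inr (γ, 1))) (dG f γ₀ 0) = 0 :=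
        e_ne f (gmB_ne_dG f γ γ₀ 0).symm
      have e2 : Wv f L U (Sum.inr (Sum.inr (γ, 2))) (dG f γ₀ 0) = 0 :=
        e_ne f (by simp [dG, ppG])
      have e3 : Wv f L U (Sum.inr (Sum.inr (γ, 3))) (dG f γ₀ 0) = 0 :=
        e_ne f (by simp [dG, ppG])
      have e4 : Wv f L U (Sum.inr (Sum.inr (γ, 4))) (dG f γ₀ 0)
          = if γ = γ₀ then 1 else 0 := by
        show e f (dG f γ 0) _ = _
        by_cases h : γ = γ₀
        · rw [h, e_self, if_pos rfl]
        · rw [e_ne f (by simp [dG_inj]; intro hh; exact absurd hh.symm h), if_neg h]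
      have e5 : Wv f L U (Sum.inr (Sum.inr (γ, 5))) (dG f γ₀ 0) = 0 := by
        show e f (dG f γ 1) _ = 0
        exact e_ne f (by simp [dG_inj])
      rw [e0, e1, e2, e3, e4, e5]
      by_cases h : γ = γ₀ <;> simp [h]
    calc ∑ γ : GMIdx f, ∑ k : Fin 6, Wv f L U (Sum.inr (Sum.inr (γ, k))) (dG f γ₀ 0)
        = ∑ γ : GMIdx f, if γ = γ₀ then 1 else 0 :=
          Finset.sum_congr rfl (fun γ _ => hinner γ)
      _ = 1 := by
          rw [Finset.sum_ite_eq' Finset.univ γ₀ (fun _ => (1:ℝ))]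
          simp
  rw [h1, h2, h3]
  norm_num



lemma PA_pin (p : GG f → ℝ) (γ : GMIdx f) (k : Fin 2) :
    PA f p (pinIdx f γ k) = p (dG f γ k) := by
  show ∑ g, p g * e f (dG f γ k) g = _
  exact sum_pe f p _

lemma PB_pin (p : GG f → ℝ) (γ : GMIdx f) (k : Fin 2) :
    PB f L U p (pinIdx f γ k) = p (ppG f γ.1) := by
  show ∑ g, p g * e f (ppG f γ.1) g = _
  exact sum_pe f p _

lemma pad_algebra {a b : ℝ} (ha : 0 < a) (hb : 0 < b) (h1 : a + b = 2)
    (h2 : 1/a + 1/b = 2) : a = 1 ∧ b = 1 := by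
  have hab : a * b = 1 := by
    field_simp at h2
    nlinarith
  constructor <;> nlinarith [sq_nonneg (a - 1), sq_nonneg (b - 1)]

lemma gm_algebra {a b c : ℝ} (ha : 0 < a) (hb : 0 < b) (hc : 0 < c)
    (h : a/(c+a) + b/(c+b) = 1) : c^2 = a * b := by
  have h1 : (0:ℝ) < c + a := by linarith
  have h2 : (0:ℝ) < c + b := by linarith
  field_simp at h
  nlinarith

section Forward

variable (hLU : ∀ j, 0 ≤ L j ∧ L j ≤ U j) {p : GG f → ℝ} {x : ιT f → GG f → ℝ}
variable (heq : IsEquilibrium (Wv f L U) (fun i => leontief (Av f L U i)) p x)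

include hLU heq

lemma forward_slpos : ∀ g, slT f g = g → 0 < p g := by
  intro g hg
  rcases (heq.1 g).lt_or_eq with h | h
  · exact h
  exfalso
  have hopt := heq.2.1 (Sum.inl g)
  refine PL.no_optimal p (Av f L U (Sum.inl g)) heq.1 (Av_nonneg f L U hLU _) ⟨g, ?_⟩
    ?_ _ hopt
  · rw [show Av f L U (Sum.inl g) = e f (slT f g) from rfl, hg, e_self]; norm_num
  · show ∑ j, p j * Av f L U (Sum.inl g) j = 0
    rw [show (∑ j, p j * Av f L U (Sum.inl g) j) = Cv f L U p (Sum.inl g) from rfl,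
      Cv_sl, hg, ← h]

lemma forward_demand (i : ιT f) {g : GG f} (hpg : 0 < p g) :
    x i g = Bv f L U p i / Cv f L U p i * Av f L U i g := by
  obtain ⟨g₀, hg₀, hg₁⟩ := Av_wit f L U i
  have := PL.optimal_char p (Av f L U i) heq.1 (Av_nonneg f L U hLU i)
    ⟨g₀, by linarith⟩ (Bv_nonneg f L U hLU p heq.1 i)
    (Cv_pos f L U hLU p heq.1 (forward_slpos f L U hLU heq) i)
    (heq.2.1 i) g hpg
  exact this

lemma forward_clear {g : GG f} (hpg : 0 < p g) :
    ∑ i, Bv f L U p i / Cv f L U p i * Av f L U i g = ∑ i, Wv f L U i g := by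
  rw [← heq.2.2.2 g hpg]
  exact Finset.sum_congr rfl (fun i _ => (forward_demand f L U hLU heq i hpg).symm)

/-- the ratio of an agent `Sum.inl g` -/
lemma tv_sl (g : GG f) :
    Bv f L U p (Sum.inl g) / Cv f L U p (Sum.inl g) = 1 := by
  rw [Bv_sl, Cv_sl]
  exact div_self (forward_slpos f L U hLU heq _ (slT_idem f g)).ne'

lemma forward_lin (ℓ : LinIdx f) :
    PA f p ℓ = PB f L U p ℓ ∧ p (padG f ℓ 0) = p (padG f ℓ 1) := by
  have hps := forward_slpos f L U hLU heq
  have hp0 : 0 < p (padG f ℓ 0) := hps _ (slT_padG f ℓ 0)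
  have hp1 : 0 < p (padG f ℓ 1) := hps _ (slT_padG f ℓ 1)
  have hP : 0 < PA f p ℓ + p (padG f ℓ 0) := by
    have := Cv_pos f L U hLU p heq.1 hps (Sum.inr (Sum.inl (ℓ, 1)))
    rwa [(Cv_lin f L U p ℓ).2.1] at this
  have hQ : 0 < PB f L U p ℓ + p (padG f ℓ 1) := by
    have := Cv_pos f L U hLU p heq.1 hps (Sum.inr (Sum.inl (ℓ, 0)))
    rwa [(Cv_lin f L U p ℓ).1] at this
  have hc0 := forward_clear f L U hLU heq (g := padG f ℓ 0) hp0
  have hc1 := forward_clear f L U hLU heq (g := padG f ℓ 1) hp1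
  rw [sum_A_pad f L U _ ℓ 0, sum_W_pad f L U ℓ 0] at hc0
  rw [sum_A_pad f L U _ ℓ 1, sum_W_pad f L U ℓ 1] at hc1
  norm_num at hc0 hc1
  rw [tv_sl f L U hLU heq] at hc0 hc1
  rw [(Bv_lin f L U p ℓ).2.1, (Cv_lin f L U p ℓ).2.1,
    (Bv_lin f L U p ℓ).2.2.2, (Cv_lin f L U p ℓ).2.2.2] at hc0
  rw [(Bv_lin f L U p ℓ).1, (Cv_lin f L U p ℓ).1,
    (Bv_lin f L U p ℓ).2.2.1, (Cv_lin f L U p ℓ).2.2.1] at hc1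
  set P := PA f p ℓ + p (padG f ℓ 0) with hPdef
  set Q := PB f L U p ℓ + p (padG f ℓ 1) with hQdef
  have h1 : Q / P + p (padG f ℓ 1) / p (padG f ℓ 0) = 2 := by linarith
  have h2 : P / Q + p (padG f ℓ 0) / p (padG f ℓ 1) = 2 := by linarith
  have ha : 0 < Q / P := div_pos hQ hP
  have hb : 0 < p (padG f ℓ 1) / p (padG f ℓ 0) := div_pos hp1 hp0
  have h2' : 1 / (Q / P) + 1 / (p (padG f ℓ 1) / p (padG f ℓ 0)) = 2 := by
    rw [one_div_div, one_div_div]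
    exact h2
  obtain ⟨hA, hB⟩ := pad_algebra ha hb h1 h2'
  have hQP : Q = P := by
    field_simp at hA
    linarith
  have hpp : p (padG f ℓ 1) = p (padG f ℓ 0) := by
    field_simp at hB
    linarith
  constructor
  · rw [hPdef, hQdef] at hQP
    linarith
  · linarith

lemma forward_gm (γ : GMIdx f) :
    p (ppG f γ.1) ^ 2 = p (gmA f γ) * p (gmB f γ) := by
  have hps := forward_slpos f L U hLU heq
  have hc : 0 < p (ppG f γ.1) := hps _ (slT_ppG f γ.1)
  have ha : 0 < p (gmA f γ) := hps _ (slT_gmA f γ)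
  have hb : 0 < p (gmB f γ) := hps _ (slT_gmB f γ)
  have hd0 : 0 < p (dG f γ 0) := hps _ (slT_dG f γ 0)
  -- the pin forces p (dG γ 0) = p (ppG γ.1)
  have hpin := forward_lin f L U hLU heq (pinIdx f γ 0)
  have hdc : p (dG f γ 0) = p (ppG f γ.1) := by
    have := hpin.1
    rwa [PA_pin f p γ 0, PB_pin f L U p γ 0] at this
  -- clearing at dG γ 0
  have hc0 := forward_clear f L U hLU heq (g := dG f γ 0) hd0
  rw [sum_A_dG f L U _ γ, sum_W_dG f L U γ] at hc0
  rw [tv_sl f L U hLU heq] at hc0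
  -- pin agent ratio is 1
  have htpin : Bv f L U p (Sum.inr (Sum.inl (pinIdx f γ 0, 1)))
      / Cv f L U p (Sum.inr (Sum.inl (pinIdx f γ 0, 1))) = 1 := by
    rw [(Bv_lin f L U p (pinIdx f γ 0)).2.1, (Cv_lin f L U p (pinIdx f γ 0)).2.1]
    rw [hpin.1, hpin.2]
    refine div_self ?_
    have := Cv_pos f L U hLU p heq.1 hps (Sum.inr (Sum.inl (pinIdx f γ 0, 1)))
    rw [(Cv_lin f L U p (pinIdx f γ 0)).2.1] at this
    rw [← hpin.1, ← hpin.2]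
    exact this.ne'
  rw [htpin] at hc0
  rw [(Bv_gm f L U p γ).1, (Cv_gm f L U p γ).1,
    (Bv_gm f L U p γ).2.1, (Cv_gm f L U p γ).2.1] at hc0
  rw [hdc] at hc0
  have heqn : p (gmA f γ) / (p (ppG f γ.1) + p (gmA f γ))
      + p (gmB f γ) / (p (ppG f γ.1) + p (gmB f γ)) = 1 := by linarith
  exact gm_algebra ha hb hc heqn

end Forward


section Backward

/-- constructed prices from a solution `z` -/
noncomputable def pz (z : Fin n → ℝ) : GG f → ℝ := fun g =>
  match g with
  | Sum.inl (Sum.inl _) => 1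
  | Sum.inl (Sum.inr (j, k)) =>
      if k = 0 then z j else if k = 1 then z j - (L j : ℝ)
      else if k = 2 then (U j : ℝ) - z j else z j + 1
  | Sum.inr (Sum.inl (Sum.inl a)) => rho z a.1
  | Sum.inr (Sum.inl (Sum.inr a)) => Real.sqrt (rho z a.1)
  | Sum.inr (Sum.inr (Sum.inl ((a, _), _))) => Real.sqrt (rho z a.1)
  | Sum.inr (Sum.inr (Sum.inr _)) => 1

variable (z : Fin n → ℝ)

@[simp] lemma pz_s : pz f L U z (sG f) = 1 := rfl
@[simp] lemma pz_v (j : Fin n) : pz f L U z (vG f j) = z j := rfl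
@[simp] lemma pz_u (j : Fin n) : pz f L U z (uG f j) = z j - (L j : ℝ) := rfl
@[simp] lemma pz_w (j : Fin n) : pz f L U z (wG f j) = (U j : ℝ) - z j := rfl
@[simp] lemma pz_z (j : Fin n) : pz f L U z (zG f j) = z j + 1 := rfl
@[simp] lemma pz_mon (a : Mon f) : pz f L U z (monG f a) = rho z a.1 := rfl
@[simp] lemma pz_pp (a : Mon' f) : pz f L U z (ppG f a) = Real.sqrt (rho z a.1) := rfl
@[simp] lemma pz_dG (γ : GMIdx f) (k : Fin 2) :
    pz f L U z (dG f γ k) = Real.sqrt (rho z γ.1.1) := rfl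
@[simp] lemma pz_pad (ℓ : LinIdx f) (k : Fin 2) : pz f L U z (padG f ℓ k) = 1 := rfl

variable (hz : ∀ j, (L j : ℝ) ≤ z j ∧ z j ≤ (U j : ℝ))
variable (hLU : ∀ j, 0 ≤ L j ∧ L j ≤ U j)

include hz hLU in
lemma z_nonneg : ∀ j, 0 ≤ z j := fun j =>
  le_trans (hLU_nonneg L U hLU j).1 (hz j).1

include hz hLU in
lemma pz_nonneg : ∀ g, 0 ≤ pz f L U z g := by
  intro g
  have hz0 := z_nonneg L U z hz hLU
  match g with
  | Sum.inl (Sum.inl _) => norm_num [pz]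
  | Sum.inl (Sum.inr (j, k)) =>
    show (0:ℝ) ≤ if k = 0 then z j else if k = 1 then z j - (L j : ℝ)
      else if k = 2 then (U j : ℝ) - z j else z j + 1
    have h1 := (hz j).1
    have h2 := (hz j).2
    have h3 := hz0 j
    split_ifs <;> linarith
  | Sum.inr (Sum.inl (Sum.inl a)) => exact (rho_pos hz0 a.1).le
  | Sum.inr (Sum.inl (Sum.inr a)) => exact Real.sqrt_nonneg _
  | Sum.inr (Sum.inr (Sum.inl ((a, q), k))) => exact Real.sqrt_nonneg _
  | Sum.inr (Sum.inr (Sum.inr _)) => norm_num [pz]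

include hz hLU in
lemma pz_slpos : ∀ g, slT f g = g → 0 < pz f L U z g := by
  intro g hg
  have hz0 := z_nonneg L U z hz hLU
  match g with
  | Sum.inl (Sum.inl _) => norm_num [pz]
  | Sum.inl (Sum.inr (j, k)) =>
    by_cases hk : k = 3
    · subst hk
      show (0:ℝ) < z j + 1
      linarith [hz0 j]
    · exfalso
      have : slT f (Sum.inl (Sum.inr (j, k)))
          = if k = 3 then (Sum.inl (Sum.inr (j, k)) : GG f) else sG f := rfl
      rw [this, if_neg hk] at hg
      exact absurd hg.symm (by simp [sG])
  | Sum.inr (Sum.inl (Sum.inl a)) => exact rho_pos hz0 a.1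
  | Sum.inr (Sum.inl (Sum.inr a)) => exact Real.sqrt_pos.mpr (rho_pos hz0 a.1)
  | Sum.inr (Sum.inr (Sum.inl ((a, q), k))) => exact Real.sqrt_pos.mpr (rho_pos hz0 a.1)
  | Sum.inr (Sum.inr (Sum.inr _)) => norm_num [pz]

/- values of gmA/gmB under pz -/
lemma pz_gm_mul (hz0 : ∀ j, 0 ≤ z j) (γ : GMIdx f) :
    pz f L U z (gmA f γ) * pz f L U z (gmB f γ) = rho z γ.1.1 := by
  obtain ⟨a, q⟩ := γ
  by_cases hq : q = 0
  · subst hq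
    rw [show gmA f (a, 0) = monG f (bdec f a) from if_pos rfl,
      show gmB f (a, 0) = zG f (jdec f a) from if_pos rfl]
    rw [pz_mon, pz_z]
    exact (rho_decomp f z a).symm
  · rw [show gmA f (a, q) = monG f (mk' f a) from if_neg hq,
      show gmB f (a, q) = sG f from if_neg hq]
    rw [pz_mon, pz_s, mul_one]
    rfl

/- sums against the coefficient vectors -/
lemma sum_p_cpos (p : GG f → ℝ) (i : Fin m) :
    ∑ g, p g * cpos f i g
      = ∑ a : Mon f, p (monG f a) * max (((gpoly f i).coeff a.1 : ℚ) : ℝ) 0 := by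
  rw [Fintype.sum_sum_type (fun g : (Unit ⊕ (Fin n × Fin 4)) ⊕ _ => p g * cpos f i g)]
  have h1 : ∑ g : Unit ⊕ (Fin n × Fin 4), p (Sum.inl g) * cpos f i (Sum.inl g) = 0 := by
    refine Finset.sum_eq_zero (fun g _ => ?_)
    match g with
    | Sum.inl _ => rw [show cpos f i (Sum.inl (Sum.inl _)) = 0 from rfl, mul_zero]
    | Sum.inr (j, k) => rw [show cpos f i (Sum.inl (Sum.inr (j, k))) = 0 from rfl, mul_zero]
  rw [h1, zero_add]
  rw [Fintype.sum_sum_type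
    (fun g : (Mon f ⊕ Mon' f) ⊕ ((GMIdx f × Fin 2) ⊕ (LinIdx f × Fin 2)) =>
      p (Sum.inr g) * cpos f i (Sum.inr g))]
  have h2 : ∑ g : (GMIdx f × Fin 2) ⊕ (LinIdx f × Fin 2),
      p (Sum.inr (Sum.inr g)) * cpos f i (Sum.inr (Sum.inr g)) = 0 := by
    refine Finset.sum_eq_zero (fun g _ => ?_)
    match g with
    | Sum.inl (γ, k) => rw [show cpos f i (Sum.inr (Sum.inr (Sum.inl (γ, k)))) = 0 from rfl,
        mul_zero]
    | Sum.inr (ℓ, k) => rw [show cpos f i (Sum.inr (Sum.inr (Sum.inr (ℓ, k)))) = 0 from rfl,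
        mul_zero]
  rw [h2, add_zero]
  rw [Fintype.sum_sum_type (fun g : Mon f ⊕ Mon' f =>
    p (Sum.inr (Sum.inl g)) * cpos f i (Sum.inr (Sum.inl g)))]
  have h3 : ∑ g : Mon' f, p (Sum.inr (Sum.inl (Sum.inr g)))
      * cpos f i (Sum.inr (Sum.inl (Sum.inr g))) = 0 := by
    refine Finset.sum_eq_zero (fun g _ => ?_)
    rw [show cpos f i (Sum.inr (Sum.inl (Sum.inr g))) = 0 from rfl, mul_zero]
  rw [h3, add_zero]
  rfl

lemma sum_p_cneg (p : GG f → ℝ) (i : Fin m) :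
    ∑ g, p g * cneg f i g
      = ∑ a : Mon f, p (monG f a) * max (-(((gpoly f i).coeff a.1 : ℚ) : ℝ)) 0 := by
  rw [Fintype.sum_sum_type (fun g : (Unit ⊕ (Fin n × Fin 4)) ⊕ _ => p g * cneg f i g)]
  have h1 : ∑ g : Unit ⊕ (Fin n × Fin 4), p (Sum.inl g) * cneg f i (Sum.inl g) = 0 := by
    refine Finset.sum_eq_zero (fun g _ => ?_)
    match g with
    | Sum.inl _ => rw [show cneg f i (Sum.inl (Sum.inl _)) = 0 from rfl, mul_zero]
    | Sum.inr (j, k) => rw [show cneg f i (Sum.inl (Sum.inr (j, k))) = 0 from rfl, mul_zero]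
  rw [h1, zero_add]
  rw [Fintype.sum_sum_type
    (fun g : (Mon f ⊕ Mon' f) ⊕ ((GMIdx f × Fin 2) ⊕ (LinIdx f × Fin 2)) =>
      p (Sum.inr g) * cneg f i (Sum.inr g))]
  have h2 : ∑ g : (GMIdx f × Fin 2) ⊕ (LinIdx f × Fin 2),
      p (Sum.inr (Sum.inr g)) * cneg f i (Sum.inr (Sum.inr g)) = 0 := by
    refine Finset.sum_eq_zero (fun g _ => ?_)
    match g with
    | Sum.inl (γ, k) => rw [show cneg f i (Sum.inr (Sum.inr (Sum.inl (γ, k)))) = 0 from rfl,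
        mul_zero]
    | Sum.inr (ℓ, k) => rw [show cneg f i (Sum.inr (Sum.inr (Sum.inr (ℓ, k)))) = 0 from rfl,
        mul_zero]
  rw [h2, add_zero]
  rw [Fintype.sum_sum_type (fun g : Mon f ⊕ Mon' f =>
    p (Sum.inr (Sum.inl g)) * cneg f i (Sum.inr (Sum.inl g)))]
  have h3 : ∑ g : Mon' f, p (Sum.inr (Sum.inl (Sum.inr g)))
      * cneg f i (Sum.inr (Sum.inl (Sum.inr g))) = 0 := by
    refine Finset.sum_eq_zero (fun g _ => ?_)
    rw [show cneg f i (Sum.inr (Sum.inl (Sum.inr g))) = 0 from rfl, mul_zero]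
  rw [h3, add_zero]
  rfl

/-- all linear gadget relations hold at `pz` -/
lemma lin_balance (hroot : ∀ i, aeval z (f i) = 0) (ℓ : LinIdx f) :
    PA f (pz f L U z) ℓ = PB f L U (pz f L U z) ℓ := by
  match ℓ with
  | Sum.inl (j, k) =>
    fin_cases k
    · show (∑ g, pz f L U z g * e f (zG f j) g)
        = ∑ g, pz f L U z g * (e f (vG f j) g + e f (sG f) g)
      rw [sum_pe, sum_p_add, sum_pe, sum_pe, pz_z, pz_v, pz_s]
    · show (∑ g, pz f L U z g * e f (vG f j) g)
        = ∑ g, pz f L U z g * ((L j : ℝ) * e f (sG f) g + e f (uG f j) g)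
      rw [sum_pe]
      have h : ∀ g, pz f L U z g * ((L j : ℝ) * e f (sG f) g + e f (uG f j) g)
          = (L j : ℝ) * (pz f L U z g * e f (sG f) g) + pz f L U z g * e f (uG f j) g := by
        intro g; ring
      rw [Finset.sum_congr rfl (fun g _ => h g), Finset.sum_add_distrib,
        ← Finset.mul_sum, sum_pe, sum_pe, pz_v, pz_u, pz_s]
      ring
    · show (∑ g, pz f L U z g * (e f (vG f j) g + e f (wG f j) g))
        = ∑ g, pz f L U z g * ((U j : ℝ) * e f (sG f) g)
      rw [sum_p_add, sum_pe, sum_pe]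
      have h : ∀ g, pz f L U z g * ((U j : ℝ) * e f (sG f) g)
          = (U j : ℝ) * (pz f L U z g * e f (sG f) g) := by intro g; ring
      rw [Finset.sum_congr rfl (fun g _ => h g), ← Finset.mul_sum, sum_pe, pz_v, pz_w, pz_s]
      ring
  | Sum.inr (Sum.inl _) =>
    show (∑ g, pz f L U z g * e f (monG f (monzero f)) g) = ∑ g, pz f L U z g * e f (sG f) g
    rw [sum_pe, sum_pe, pz_mon, pz_s]
    exact rho_zero z
  | Sum.inr (Sum.inr (Sum.inl i)) =>
    show (∑ g, pz f L U z g * cpos f i g) = ∑ g, pz f L U z g * cneg f i g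
    rw [sum_p_cpos, sum_p_cneg]
    have key : ∑ a : Mon f, pz f L U z (monG f a)
        * (max (((gpoly f i).coeff a.1 : ℚ) : ℝ) 0 - max (-(((gpoly f i).coeff a.1 : ℚ) : ℝ)) 0)
        = 0 := by
      have h2 : ∀ a : Mon f, pz f L U z (monG f a)
          * (max (((gpoly f i).coeff a.1 : ℚ) : ℝ) 0 - max (-(((gpoly f i).coeff a.1 : ℚ) : ℝ)) 0)
          = (((gpoly f i).coeff a.1 : ℚ) : ℝ) * rho z a.1 := by
        intro a
        have := cpos_sub_cneg f i a
        rw [show cpos f i (monG f a) = max (((gpoly f i).coeff a.1 : ℚ) : ℝ) 0 from rfl,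
          show cneg f i (monG f a) = max (-(((gpoly f i).coeff a.1 : ℚ) : ℝ)) 0 from rfl] at this
        rw [this, pz_mon]
        ring
      rw [Finset.sum_congr rfl (fun a _ => h2 a), sum_mon_eq_aeval f z i, hroot i]
    have h3 : (∑ a : Mon f, pz f L U z (monG f a) * max (((gpoly f i).coeff a.1 : ℚ) : ℝ) 0)
        - ∑ a : Mon f, pz f L U z (monG f a) * max (-(((gpoly f i).coeff a.1 : ℚ) : ℝ)) 0
        = ∑ a : Mon f, pz f L U z (monG f a)
          * (max (((gpoly f i).coeff a.1 : ℚ) : ℝ) 0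
            - max (-(((gpoly f i).coeff a.1 : ℚ) : ℝ)) 0) := by
      rw [← Finset.sum_sub_distrib]
      exact Finset.sum_congr rfl (fun a _ => by ring)
    rw [key] at h3
    linarith
  | Sum.inr (Sum.inr (Sum.inr (γ, k))) =>
    show (∑ g, pz f L U z g * e f (dG f γ k) g) = ∑ g, pz f L U z g * e f (ppG f γ.1) g
    rw [sum_pe, sum_pe, pz_dG, pz_pp]

end Backward


section Backward2

variable (z : Fin n → ℝ)

noncomputable def tz (i : ιT f) : ℝ :=
  Bv f L U (pz f L U z) i / Cv f L U (pz f L U z) i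

noncomputable def xz (i : ιT f) (g : GG f) : ℝ := tz f L U z i * Av f L U i g

variable (hz : ∀ j, (L j : ℝ) ≤ z j ∧ z j ≤ (U j : ℝ))
variable (hLU : ∀ j, 0 ≤ L j ∧ L j ≤ U j)
variable (hroot : ∀ i, aeval z (f i) = 0)

include hz hLU in
lemma tz_sl (g : GG f) : tz f L U z (Sum.inl g) = 1 := by
  unfold tz
  rw [Bv_sl, Cv_sl]
  exact div_self (pz_slpos f L U z hz hLU _ (slT_idem f g)).ne'

include hz hLU hroot in
lemma tz_lin (ℓ : LinIdx f) :
    (tz f L U z (Sum.inr (Sum.inl (ℓ, 0))) = 1) ∧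
    (tz f L U z (Sum.inr (Sum.inl (ℓ, 1))) = 1) ∧
    (tz f L U z (Sum.inr (Sum.inl (ℓ, 2))) = 1) ∧
    (tz f L U z (Sum.inr (Sum.inl (ℓ, 3))) = 1) := by
  have hCpos := Cv_pos f L U hLU (pz f L U z) (pz_nonneg f L U z hz hLU)
    (pz_slpos f L U z hz hLU)
  have hbal := lin_balance f L U z hroot ℓ
  unfold tz
  refine ⟨?_, ?_, ?_, ?_⟩
  · rw [(Bv_lin f L U _ ℓ).1, (Cv_lin f L U _ ℓ).1, pz_pad, pz_pad, hbal]
    refine div_self ?_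
    have := hCpos (Sum.inr (Sum.inl (ℓ, 0)))
    rw [(Cv_lin f L U _ ℓ).1, pz_pad] at this
    exact this.ne'
  · rw [(Bv_lin f L U _ ℓ).2.1, (Cv_lin f L U _ ℓ).2.1, pz_pad, pz_pad, hbal]
    refine div_self ?_
    have := hCpos (Sum.inr (Sum.inl (ℓ, 1)))
    rw [(Cv_lin f L U _ ℓ).2.1, pz_pad, hbal] at this
    exact this.ne'
  · rw [(Bv_lin f L U _ ℓ).2.2.1, (Cv_lin f L U _ ℓ).2.2.1, pz_pad, pz_pad]
    norm_num
  · rw [(Bv_lin f L U _ ℓ).2.2.2, (Cv_lin f L U _ ℓ).2.2.2, pz_pad, pz_pad]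
    norm_num

include hz hLU hroot in
lemma backward_clear (g : GG f) :
    ∑ i, xz f L U z i g = ∑ i, Wv f L U i g := by
  have hz0 := z_nonneg L U z hz hLU
  rw [← sub_eq_zero, ← Finset.sum_sub_distrib]
  rw [sum_iota f (fun i => xz f L U z i g - Wv f L U i g)]
  have h1 : ∑ g' : GG f, (xz f L U z (Sum.inl g') g - Wv f L U (Sum.inl g') g) = 0 := by
    refine Finset.sum_eq_zero (fun g' _ => ?_)
    unfold xz
    rw [tz_sl f L U z hz hLU, one_mul]
    show e f (slT f g') g - e f (slT f g') g = 0
    ring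
  have h2 : ∑ ℓ : LinIdx f, ∑ k : Fin 4,
      (xz f L U z (Sum.inr (Sum.inl (ℓ, k))) g - Wv f L U (Sum.inr (Sum.inl (ℓ, k))) g) = 0 := by
    refine Finset.sum_eq_zero (fun ℓ _ => ?_)
    rw [Fin.sum_univ_four]
    unfold xz
    rw [(tz_lin f L U z hz hLU hroot ℓ).1, (tz_lin f L U z hz hLU hroot ℓ).2.1,
      (tz_lin f L U z hz hLU hroot ℓ).2.2.1, (tz_lin f L U z hz hLU hroot ℓ).2.2.2]
    show 1 * (linB f L U ℓ g + e f (padG f ℓ 1) g) - (linA f ℓ g + e f (padG f ℓ 0) g)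
      + (1 * (linA f ℓ g + e f (padG f ℓ 0) g) - (linB f L U ℓ g + e f (padG f ℓ 1) g))
      + (1 * e f (padG f ℓ 1) g - e f (padG f ℓ 0) g)
      + (1 * e f (padG f ℓ 0) g - e f (padG f ℓ 1) g) = 0
    ring
  have h3 : ∑ γ : GMIdx f, ∑ k : Fin 6,
      (xz f L U z (Sum.inr (Sum.inr (γ, k))) g - Wv f L U (Sum.inr (Sum.inr (γ, k))) g) = 0 := by
    refine Finset.sum_eq_zero (fun γ _ => ?_)
    rw [Fin.sum_univ_six]
    set a := pz f L U z (gmA f γ) with hadef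
    set b := pz f L U z (gmB f γ) with hbdef
    set c := Real.sqrt (rho z γ.1.1) with hcdef
    have hapos : 0 < a := pz_slpos f L U z hz hLU _ (slT_gmA f γ)
    have hbpos : 0 < b := pz_slpos f L U z hz hLU _ (slT_gmB f γ)
    have hcpos : 0 < c := Real.sqrt_pos.mpr (rho_pos hz0 _)
    have hc2 : c ^ 2 = a * b := by
      rw [hcdef, Real.sq_sqrt (rho_pos hz0 _).le, hadef, hbdef, pz_gm_mul f L U z hz0 γ]
    have ht0 : tz f L U z (Sum.inr (Sum.inr (γ, 0))) = a / (c + a) := by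
      unfold tz
      rw [(Bv_gm f L U _ γ).1, (Cv_gm f L U _ γ).1, pz_dG]
    have ht1 : tz f L U z (Sum.inr (Sum.inr (γ, 1))) = b / (c + b) := by
      unfold tz
      rw [(Bv_gm f L U _ γ).2.1, (Cv_gm f L U _ γ).2.1, pz_dG]
    have ht2 : tz f L U z (Sum.inr (Sum.inr (γ, 2))) = c / (c + a) := by
      unfold tz
      rw [(Bv_gm f L U _ γ).2.2.1, (Cv_gm f L U _ γ).2.2.1, pz_dG, pz_pp]
    have ht3 : tz f L U z (Sum.inr (Sum.inr (γ, 3))) = c / (c + b) := by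
      unfold tz
      rw [(Bv_gm f L U _ γ).2.2.2.1, (Cv_gm f L U _ γ).2.2.2.1, pz_dG, pz_pp]
    have ht4 : tz f L U z (Sum.inr (Sum.inr (γ, 4))) = 1 := by
      unfold tz
      rw [(Bv_gm f L U _ γ).2.2.2.2.1, (Cv_gm f L U _ γ).2.2.2.2.1, pz_dG, pz_pp]
      exact div_self hcpos.ne'
    have ht5 : tz f L U z (Sum.inr (Sum.inr (γ, 5))) = 1 := by
      unfold tz
      rw [(Bv_gm f L U _ γ).2.2.2.2.2, (Cv_gm f L U _ γ).2.2.2.2.2, pz_dG, pz_pp]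
      exact div_self hcpos.ne'
    unfold xz
    rw [ht0, ht1, ht2, ht3, ht4, ht5]
    show a / (c + a) * (e f (dG f γ 0) g + e f (gmA f γ) g) - e f (gmA f γ) g
      + (b / (c + b) * (e f (dG f γ 0) g + e f (gmB f γ) g) - e f (gmB f γ) g)
      + (c / (c + a) * (e f (dG f γ 1) g + e f (gmA f γ) g) - e f (ppG f γ.1) g)
      + (c / (c + b) * (e f (dG f γ 1) g + e f (gmB f γ) g) - e f (ppG f γ.1) g)
      + (1 * e f (ppG f γ.1) g - e f (dG f γ 0) g)
      + (1 * e f (ppG f γ.1) g - e f (dG f γ 1) g) = 0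
    have hca : c + a ≠ 0 := by positivity
    have hcb : c + b ≠ 0 := by positivity
    have h01 : a / (c + a) + b / (c + b) = 1 := by
      field_simp
      nlinarith
    have h23 : c / (c + a) + c / (c + b) = 1 := by
      field_simp
      nlinarith
    have h02 : a / (c + a) + c / (c + a) = 1 := by
      field_simp
      ring
    have h13 : b / (c + b) + c / (c + b) = 1 := by
      field_simp
      ring
    linear_combination e f (dG f γ 0) g * h01 + e f (dG f γ 1) g * h23
      + e f (gmA f γ) g * h02 + e f (gmB f γ) g * h13
  rw [h1, h2, h3]
  norm_num

include hz hLU hroot in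
lemma backward_equilibrium :
    IsEquilibrium (Wv f L U) (fun i => leontief (Av f L U i)) (pz f L U z) (xz f L U z) := by
  refine ⟨pz_nonneg f L U z hz hLU, ?_, ?_, ?_⟩
  · intro i
    obtain ⟨g₀, hg₀, hg₁⟩ := Av_wit f L U i
    have hopt := PL.optimal_of (pz f L U z) (Av f L U i) (pz_nonneg f L U z hz hLU)
      (Av_nonneg f L U hLU i) ⟨g₀, by linarith⟩
      (Bv_nonneg f L U hLU _ (pz_nonneg f L U z hz hLU) i)
      (Cv_pos f L U hLU _ (pz_nonneg f L U z hz hLU) (pz_slpos f L U z hz hLU) i)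
    exact hopt
  · intro g
    exact le_of_eq (backward_clear f L U z hz hLU hroot g)
  · intro g _
    exact backward_clear f L U z hz hLU hroot g

end Backward2


section Extract

variable (hLU : ∀ j, 0 ≤ L j ∧ L j ≤ U j) {p : GG f → ℝ} {x : ιT f → GG f → ℝ}
variable (heq : IsEquilibrium (Wv f L U) (fun i => leontief (Av f L U i)) p x)

lemma sum_single_nat (α : Fin n →₀ ℕ) (j : Fin n) (h : α + Finsupp.single j 1 ≠ 0 → True) :
    True := trivial

include hLU heq

lemma forward_box (j : Fin n) :
    p (zG f j) = p (vG f j) + p (sG f)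
    ∧ (L j : ℝ) * p (sG f) + p (uG f j) = p (vG f j)
    ∧ p (vG f j) + p (wG f j) = (U j : ℝ) * p (sG f) := by
  have h0 := (forward_lin f L U hLU heq (Sum.inl (j, 0))).1
  have h1 := (forward_lin f L U hLU heq (Sum.inl (j, 1))).1
  have h2 := (forward_lin f L U hLU heq (Sum.inl (j, 2))).1
  have e0A : PA f p (Sum.inl (j, 0)) = p (zG f j) := by
    show (∑ g, p g * e f (zG f j) g) = _
    rw [sum_pe]
  have e0B : PB f L U p (Sum.inl (j, 0)) = p (vG f j) + p (sG f) := by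
    show (∑ g, p g * (e f (vG f j) g + e f (sG f) g)) = _
    rw [sum_p_add, sum_pe, sum_pe]
  have e1A : PA f p (Sum.inl (j, 1)) = p (vG f j) := by
    show (∑ g, p g * e f (vG f j) g) = _
    rw [sum_pe]
  have e1B : PB f L U p (Sum.inl (j, 1)) = (L j : ℝ) * p (sG f) + p (uG f j) := by
    show (∑ g, p g * ((L j : ℝ) * e f (sG f) g + e f (uG f j) g)) = _
    have h : ∀ g, p g * ((L j : ℝ) * e f (sG f) g + e f (uG f j) g)
        = (L j : ℝ) * (p g * e f (sG f) g) + p g * e f (uG f j) g := fun g => by ring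
    rw [Finset.sum_congr rfl (fun g _ => h g), Finset.sum_add_distrib, ← Finset.mul_sum,
      sum_pe, sum_pe]
  have e2A : PA f p (Sum.inl (j, 2)) = p (vG f j) + p (wG f j) := by
    show (∑ g, p g * (e f (vG f j) g + e f (wG f j) g)) = _
    rw [sum_p_add, sum_pe, sum_pe]
  have e2B : PB f L U p (Sum.inl (j, 2)) = (U j : ℝ) * p (sG f) := by
    show (∑ g, p g * ((U j : ℝ) * e f (sG f) g)) = _
    have h : ∀ g, p g * ((U j : ℝ) * e f (sG f) g)
        = (U j : ℝ) * (p g * e f (sG f) g) := fun g => by ring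
    rw [Finset.sum_congr rfl (fun g _ => h g), ← Finset.mul_sum, sum_pe]
  rw [e0A, e0B] at h0
  rw [e1A, e1B] at h1
  rw [e2A, e2B] at h2
  exact ⟨h0, h1.symm, h2⟩

lemma forward_mon :
    ∀ a : Mon f, p (monG f a)
      = rho (fun j => p (vG f j) / p (sG f)) a.1 * p (sG f) := by
  have hps : 0 < p (sG f) := forward_slpos f L U hLU heq _ (slT_sG f)
  set zz : Fin n → ℝ := fun j => p (vG f j) / p (sG f) with hzz
  have key : ∀ N : ℕ, ∀ a : Mon f, (a.1.sum fun _ k => k) = N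
      → p (monG f a) = rho zz a.1 * p (sG f) := by
    intro N
    induction N using Nat.strong_induction_on with
    | _ N IH =>
      intro a hN
      by_cases h0 : a.1 = 0
      · have ha : a = monzero f := Subtype.ext h0
        subst ha
        have hm := (forward_lin f L U hLU heq (Sum.inr (Sum.inl ()))).1
        have eA : PA f p (Sum.inr (Sum.inl ())) = p (monG f (monzero f)) := by
          show (∑ g, p g * e f (monG f (monzero f)) g) = _
          rw [sum_pe]
        have eB : PB f L U p (Sum.inr (Sum.inl ())) = p (sG f) := by
          show (∑ g, p g * e f (sG f) g) = _
          rw [sum_pe]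
        rw [eA, eB] at hm
        rw [hm, show (monzero f).1 = 0 from rfl, rho_zero]
        ring
      · set a' : Mon' f := ⟨a.1, a.2, h0⟩ with ha'
        have hmk : mk' f a' = a := Subtype.ext rfl
        have hg0 := forward_gm f L U hLU heq (a', 0)
        have hg1 := forward_gm f L U hLU heq (a', 1)
        rw [show gmA f (a', 0) = monG f (bdec f a') from if_pos rfl,
          show gmB f (a', 0) = zG f (jdec f a') from if_pos rfl] at hg0
        rw [show gmA f (a', 1) = monG f (mk' f a') from if_neg (by norm_num),
          show gmB f (a', 1) = sG f from if_neg (by norm_num), hmk] at hg1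
        have hrel : p (monG f a) * p (sG f)
            = p (monG f (bdec f a')) * p (zG f (jdec f a')) := by
          rw [← hg1, hg0]
        -- size decrease
        have hdec := decomp f a'
        have hsz : ((bdec f a').1.sum fun _ k => k) + 1 = N := by
          have := congrArg (fun β : Fin n →₀ ℕ => β.sum fun _ k => k) hdec
          beta_reduce at this
          rw [Finsupp.sum_add_index' (fun _ => rfl) (fun _ _ _ => rfl)] at this
          rw [Finsupp.sum_single_index rfl] at this
          rw [← hN]
          exact this
        have hb := IH (((bdec f a').1.sum fun _ k => k)) (by omega) (bdec f a') rfl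
        have hzG : p (zG f (jdec f a')) = (zz (jdec f a') + 1) * p (sG f) := by
          have := (forward_box f L U hLU heq (jdec f a')).1
          rw [this, hzz]
          field_simp
        have : p (monG f a) * p (sG f)
            = rho zz (bdec f a').1 * (zz (jdec f a') + 1) * p (sG f) * p (sG f) := by
          rw [hrel, hb, hzG]
          ring
        have hmain : p (monG f a) = rho zz (bdec f a').1 * (zz (jdec f a') + 1) * p (sG f) := by
          refine mul_right_cancel₀ hps.ne' (this.trans (by ring))
        rw [hmain, ← rho_decomp f zz a']
  intro a
  exact key (a.1.sum fun _ k => k) a rfl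

lemma forward_sol (z : Fin n → ℝ) (hzp : ∀ j, z j = p (vG f j) / p (sG f)) :
    (∀ i, aeval z (f i) = 0) ∧ ∀ j, (L j : ℝ) ≤ z j ∧ z j ≤ (U j : ℝ) := by
  have hps : 0 < p (sG f) := forward_slpos f L U hLU heq _ (slT_sG f)
  have hzz : z = fun j => p (vG f j) / p (sG f) := funext hzp
  constructor
  · intro i
    have hlin := (forward_lin f L U hLU heq (Sum.inr (Sum.inr (Sum.inl i)))).1
    have eA : PA f p (Sum.inr (Sum.inr (Sum.inl i))) = ∑ g, p g * cpos f i g := rfl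
    have eB : PB f L U p (Sum.inr (Sum.inr (Sum.inl i))) = ∑ g, p g * cneg f i g := rfl
    rw [eA, eB, sum_p_cpos, sum_p_cneg] at hlin
    have hkey : ∑ a : Mon f, p (monG f a) * (((gpoly f i).coeff a.1 : ℚ) : ℝ) = 0 := by
      have : ∑ a : Mon f, p (monG f a) * (((gpoly f i).coeff a.1 : ℚ) : ℝ)
          = (∑ a : Mon f, p (monG f a) * max (((gpoly f i).coeff a.1 : ℚ) : ℝ) 0)
            - ∑ a : Mon f, p (monG f a) * max (-(((gpoly f i).coeff a.1 : ℚ) : ℝ)) 0 := by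
        rw [← Finset.sum_sub_distrib]
        refine Finset.sum_congr rfl (fun a _ => ?_)
        have h := cpos_sub_cneg f i a
        rw [show cpos f i (monG f a) = max (((gpoly f i).coeff a.1 : ℚ) : ℝ) 0 from rfl,
          show cneg f i (monG f a) = max (-(((gpoly f i).coeff a.1 : ℚ) : ℝ)) 0 from rfl] at h
        calc p (monG f a) * (((gpoly f i).coeff a.1 : ℚ) : ℝ)
            = p (monG f a) * (max (((gpoly f i).coeff a.1 : ℚ) : ℝ) 0
              - max (-(((gpoly f i).coeff a.1 : ℚ) : ℝ)) 0) := by rw [h]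
          _ = p (monG f a) * max (((gpoly f i).coeff a.1 : ℚ) : ℝ) 0
              - p (monG f a) * max (-(((gpoly f i).coeff a.1 : ℚ) : ℝ)) 0 := by ring
      rw [this, hlin]
      ring
    have hmon := forward_mon f L U hLU heq
    have h2 : ∑ a : Mon f, (((gpoly f i).coeff a.1 : ℚ) : ℝ) * rho z a.1 = 0 := by
      have h3 : ∀ a : Mon f, p (monG f a) * (((gpoly f i).coeff a.1 : ℚ) : ℝ)
          = ((((gpoly f i).coeff a.1 : ℚ) : ℝ) * rho z a.1) * p (sG f) := by
        intro a
        rw [hmon a, hzz]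
        ring
      rw [Finset.sum_congr rfl (fun a _ => h3 a), ← Finset.sum_mul] at hkey
      rcases mul_eq_zero.mp hkey with h | h
      · exact h
      · exact absurd h hps.ne'
    rw [sum_mon_eq_aeval f z i] at h2
    exact h2
  · intro j
    obtain ⟨h0, h1, h2⟩ := forward_box f L U hLU heq j
    have hu : 0 ≤ p (uG f j) := heq.1 _
    have hw : 0 ≤ p (wG f j) := heq.1 _
    rw [hzp j]
    constructor
    · rw [le_div_iff₀ hps]
      linarith
    · rw [div_le_iff₀ hps]
      linarith

end Extract

end PL2


open PL2

/-- **Polynomial systems as Leontief market equilibria.**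
For every bounded polynomial system `F` there is an exchange market, all of
whose agents have Leontief utilities, with distinguished goods
`G_1, …, G_n, G_s`, such that every equilibrium has `p (G_s) > 0` and the
equilibrium price vectors normalized by `p (G_s) = 1`, projected onto
`G_1, …, G_n`, are exactly the solutions of `F`; in particular the market has an
equilibrium iff `F` has a solution. -/
theorem poly_system_to_leontief_market (m n : ℕ)
    (f : Fin m → MvPolynomial (Fin n) ℚ) (L U : Fin n → ℚ)
    (hLU : ∀ j, 0 ≤ L j ∧ L j ≤ U j) :
    ∃ (ι G : Type) (_i : Fintype ι) (_g : Fintype G)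
      (W : ι → G → ℝ) (Ut : ι → (G → ℝ) → ℝ) (gG : Fin n → G) (gs : G),
      Function.Injective gG ∧ gs ∉ Set.range gG ∧
      (∀ i j, 0 ≤ W i j) ∧
      (∀ i, ∃ A : G → ℝ, (∀ j, 0 ≤ A j) ∧ A ≠ 0 ∧ Ut i = leontief A) ∧
      (∀ (p : G → ℝ) (x : ι → G → ℝ),
        @IsEquilibrium ι G _i _g W Ut p x → 0 < p gs) ∧
      (∀ z : Fin n → ℝ,
        (∃ (p : G → ℝ) (x : ι → G → ℝ),
            @IsEquilibrium ι G _i _g W Ut p x ∧ ∀ j, z j = p (gG j) / p gs) ↔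
          ((∀ i, MvPolynomial.aeval z (f i) = 0) ∧
            ∀ j, (L j : ℝ) ≤ z j ∧ z j ≤ (U j : ℝ))) ∧
      ((∃ (p : G → ℝ) (x : ι → G → ℝ), @IsEquilibrium ι G _i _g W Ut p x) ↔
        ∃ z : Fin n → ℝ, (∀ i, MvPolynomial.aeval z (f i) = 0) ∧
          ∀ j, (L j : ℝ) ≤ z j ∧ z j ≤ (U j : ℝ)) := by
    classical
  refine ⟨ιT f, GG f, inferInstance, inferInstance, Wv f L U,
    (fun i => leontief (Av f L U i)), vG f, sG f, ?_, ?_, ?_, ?_, ?_, ?_, ?_⟩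
  · intro a b h
    simpa [vG] using h
  · rintro ⟨j, h⟩
    simp [vG, sG] at h
  · exact fun i g => Wv_nonneg f L U hLU i g
  · intro i
    refine ⟨Av f L U i, Av_nonneg f L U hLU i, ?_, rfl⟩
    obtain ⟨g₀, _, hg₁⟩ := Av_wit f L U i
    intro h0
    have := congrFun h0 g₀
    simp only [Pi.zero_apply] at this
    linarith
  · intro p x heq
    exact forward_slpos f L U hLU heq _ (slT_sG f)
  · intro z
    constructor
    · rintro ⟨p, x, heq, hzp⟩
      exact forward_sol f L U hLU heq z hzp
    · rintro ⟨hroot, hbox⟩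
      refine ⟨pz f L U z, xz f L U z,
        backward_equilibrium f L U z hbox hLU hroot, fun j => ?_⟩
      rw [pz_v, pz_s]
      norm_num
  · constructor
    · rintro ⟨p, x, heq⟩
      exact ⟨fun j => p (vG f j) / p (sG f),
        forward_sol f L U hLU heq _ (fun j => rfl)⟩
    · rintro ⟨z, hroot, hbox⟩
      exact ⟨pz f L U z, xz f L U z, backward_equilibrium f L U z hbox hLU hroot⟩
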